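/- arXiv:1402.1392 — 2 statements merged into one kernel-verified Lean document; each statement's English description precedes it below -/
import Mathlib

section
/- Let A be an indecomposable GCM of affine or indefinite type. For i = 1,…,n define the walls W_{i,+} = {Z ∈ Xreg^N : Z(α_i) ∈ ℝ_{>0} and Z(α_j) ∈ ℍ for all j ≠ i} and W_{i,−} = {Z ∈ Xreg^N : Z(α_i) ∈ ℝ_{<0} and Z(α_j) ∈ ℍ for all j ≠ i}. Then for every Z ∈ W_{i,+} ∪ W_{i,−} there is an open neighborhood U of Z in Xreg^N such that U ⊆ C^N ∪ r_i(C^N). -/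
open scoped BigOperators

noncomputable section

namespace KacMoodyStab

variable {ι : Type*} [Fintype ι] [DecidableEq ι]

/-- A symmetric generalized Cartan matrix: symmetric, `2` on the diagonal,
non-positive integers off the diagonal. -/
def IsGCM (A : Matrix ι ι ℤ) : Prop :=
  A.IsSymm ∧ (∀ i, A i i = 2) ∧ ∀ i j, i ≠ j → A i j ≤ 0

/-- The simple root `α i` in the root lattice `L = ι → ℤ`. -/
def sroot (i : ι) : ι → ℤ := Pi.single i 1

/-- The symmetric bilinear form `(x, y) = ∑ i j, x i * A i j * y j` on the root lattice. -/
def bform (A : Matrix ι ι ℤ) (x y : ι → ℤ) : ℤ := ∑ i, ∑ j, x i * A i j * y j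

/-- The linear functional `λ ↦ (λ, α i)`. -/
def corootFn (A : Matrix ι ι ℤ) (i : ι) : (ι → ℤ) →ₗ[ℤ] ℤ where
  toFun x := ∑ j, x j * A j i
  map_add' x y := by simp [add_mul, Finset.sum_add_distrib]
  map_smul' c x := by simp [Finset.mul_sum, mul_assoc]

lemma corootFn_sroot (A : Matrix ι ι ℤ) (hA : IsGCM A) (i : ι) :
    corootFn A i (sroot i) = 2 := by
  have h : ∀ j, (sroot i) j * A j i = if j = i then A j i else 0 := by
    intro j
    by_cases h : j = i <;> simp [sroot, Pi.single_apply, h]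
  have : corootFn A i (sroot i) = ∑ j, (sroot i) j * A j i := rfl
  rw [this]
  simp [h, hA.2.1 i]

/-- The simple reflection `r i : λ ↦ λ - (λ, α i) α i` as a `ℤ`-linear automorphism
of the root lattice. -/
def srefl (A : Matrix ι ι ℤ) (hA : IsGCM A) (i : ι) : (ι → ℤ) ≃ₗ[ℤ] (ι → ℤ) :=
  Module.reflection (corootFn_sroot A hA i)

/-- The Weyl group, the subgroup of automorphisms of the root lattice generated by the
simple reflections. -/
def weylGroup (A : Matrix ι ι ℤ) (hA : IsGCM A) : Subgroup ((ι → ℤ) ≃ₗ[ℤ] (ι → ℤ)) :=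
  Subgroup.closure (Set.range (srefl A hA))

/-- The set of real roots: the orbit of the simple roots under the Weyl group. -/
def realRoots (A : Matrix ι ι ℤ) (hA : IsGCM A) : Set (ι → ℤ) :=
  {α | ∃ w ∈ weylGroup A hA, ∃ i, α = w (sroot i)}

/-- The set of positive real roots. -/
def posRealRoots (A : Matrix ι ι ℤ) (hA : IsGCM A) : Set (ι → ℤ) :=
  realRoots A hA ∩ {α | ∀ i, 0 ≤ α i}

/-- The Dynkin diagram of a (symmetric) GCM: distinct `i`, `j` are adjacent
iff `A i j < 0`. -/
def dynkin (A : Matrix ι ι ℤ) : SimpleGraph ι where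
  Adj i j := i ≠ j ∧ (A i j < 0 ∨ A j i < 0)
  symm := ⟨fun i j h => ⟨h.1.symm, h.2.symm⟩⟩
  loopless := ⟨fun i h => h.1 rfl⟩

/-- The fundamental set `K` of positive imaginary roots: non-zero, non-negative,
connected support, and `(α, α i) ≤ 0` for all `i`. -/
def fundamentalSet (A : Matrix ι ι ℤ) : Set (ι → ℤ) :=
  {α | (∀ i, 0 ≤ α i) ∧ α ≠ 0 ∧
    ((dynkin A).induce {i | α i ≠ 0}).Connected ∧
    ∀ i, bform A α (sroot i) ≤ 0}

/-- The set of positive imaginary roots: the orbit of the fundamental set under the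
Weyl group. -/
def posImRoots (A : Matrix ι ι ℤ) (hA : IsGCM A) : Set (ι → ℤ) :=
  {β | ∃ w ∈ weylGroup A hA, ∃ α ∈ fundamentalSet A, β = w α}

/-- The set of all roots `Δ = Δ^re ∪ Δ^im`. -/
def allRoots (A : Matrix ι ι ℤ) (hA : IsGCM A) : Set (ι → ℤ) :=
  realRoots A hA ∪ (posImRoots A hA ∪ {α | -α ∈ posImRoots A hA})

/-- The canonical embedding of the root lattice into `V*_ℝ = L ⊗ ℝ = ι → ℝ`. -/
def castR (α : ι → ℤ) : ι → ℝ := fun i => (α i : ℝ)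

/-- The imaginary cone: the closure of the convex hull of `Δ^im_+ ∪ {0}` in `V*_ℝ`. -/
def imCone (A : Matrix ι ι ℤ) (hA : IsGCM A) : Set (ι → ℝ) :=
  closure (convexHull ℝ (insert 0 (castR '' posImRoots A hA)))

/-- The pairing of `Z ∈ V = Hom_ℤ(L, ℂ)` (recorded by its values `Z i = Z(α i)`)
with an element of `V*_ℝ`, via the `ℝ`-linear extension of `Z`. -/
def pairC (Z : ι → ℂ) (l : ι → ℝ) : ℂ := ∑ i, Z i * (l i : ℂ)

/-- The pairing of `Z ∈ V = Hom_ℤ(L, ℂ)` with an element of the root lattice. -/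
def pairCZ (Z : ι → ℂ) (α : ι → ℤ) : ℂ := ∑ i, Z i * (α i : ℂ)

/-- The pairing of `Z ∈ V_ℝ = Hom_ℤ(L, ℝ)` with an element of `V*_ℝ`. -/
def pairR (Z : ι → ℝ) (l : ι → ℝ) : ℝ := ∑ i, Z i * l i

/-- The set `X = V \ ∪_{λ ∈ I₀} H_λ`. -/
def Xset (A : Matrix ι ι ℤ) (hA : IsGCM A) : Set (ι → ℂ) :=
  {Z | ∀ l ∈ imCone A hA \ {0}, pairC Z l ≠ 0}

/-- The regular subset `Xreg = X \ ∪_{α ∈ Δ^re_+} H_α`. -/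
def Xreg (A : Matrix ι ι ℤ) (hA : IsGCM A) : Set (ι → ℂ) :=
  Xset A hA ∩ {Z | ∀ α ∈ posRealRoots A hA, pairCZ Z α ≠ 0}

/-- The sector `{r e^{iπφ} : r > 0, φ₁ ≤ φ ≤ φ₂}` in `ℂ`. -/
def sector (φ₁ φ₂ : ℝ) : Set ℂ :=
  {z | ∃ r : ℝ, 0 < r ∧ ∃ φ : ℝ, φ₁ ≤ φ ∧ φ ≤ φ₂ ∧
    z = (r : ℂ) * Complex.exp (Real.pi * φ * Complex.I)}

/-- The contragredient action of a lattice automorphism `w` on `V = Hom_ℤ(L, ℂ)`: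
`(w·Z)(α i) = Z(w⁻¹ α i)`. -/
def actC (w : (ι → ℤ) ≃ₗ[ℤ] (ι → ℤ)) (Z : ι → ℂ) : ι → ℂ :=
  fun i => ∑ j, Z j * ((w.symm (sroot i)) j : ℂ)

/-- The contragredient action of a lattice automorphism `w` on `V_ℝ = Hom_ℤ(L, ℝ)`:
`(w·Z)(α i) = Z(w⁻¹ α i)`. -/
def actR (w : (ι → ℤ) ≃ₗ[ℤ] (ι → ℤ)) (Z : ι → ℝ) : ι → ℝ :=
  fun i => ∑ j, Z j * ((w.symm (sroot i)) j : ℝ)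

/-- The `ℝ`-linear extension of a lattice automorphism `w` to `V*_ℝ = L ⊗ ℝ`. -/
def extR (w : (ι → ℤ) ≃ₗ[ℤ] (ι → ℤ)) (l : ι → ℝ) : ι → ℝ :=
  fun i => ∑ j, ((w (sroot j)) i : ℝ) * l j

/-- Finite type for a GCM (Kac's condition (Fin)). -/
def IsFiniteType (A : Matrix ι ι ℤ) : Prop :=
  A.det ≠ 0 ∧
  (∃ u : ι → ℝ, (∀ i, 0 < u i) ∧ ∀ i, 0 < (A.map (Int.cast : ℤ → ℝ)).mulVec u i) ∧
  ∀ u : ι → ℝ, (∀ i, 0 ≤ (A.map (Int.cast : ℤ → ℝ)).mulVec u i) →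
    (∀ i, 0 < u i) ∨ u = 0

/-- The (open) Weyl chamber `C_ℝ` in `V_ℝ`. -/
def weylChamber : Set (ι → ℝ) := {Z | ∀ i, 0 < Z i}

/-- The closed Weyl chamber in `V_ℝ`. -/
def weylChamberCl : Set (ι → ℝ) := {Z | ∀ i, 0 ≤ Z i}

/-- The Tits cone `T_ℝ = ∪_{w ∈ W} w(C̄_ℝ)`. -/
def titsCone (A : Matrix ι ι ℤ) (hA : IsGCM A) : Set (ι → ℝ) :=
  ⋃ w ∈ weylGroup A hA, actR w '' (weylChamberCl (ι := ι))

/-- The regular part of the Tits cone `T_{ℝ,reg} = ∪_{w ∈ W} w(C_ℝ)`. -/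
def titsConeReg (A : Matrix ι ι ℤ) (hA : IsGCM A) : Set (ι → ℝ) :=
  ⋃ w ∈ weylGroup A hA, actR w '' (weylChamber (ι := ι))

/-- The normalized regular subset `Xreg^N = {Z ∈ Xreg : φ^I(Z) = 1/2}`:
the image `Z(I₀)` is a sector `{r e^{iπφ} : r > 0, φ₁ ≤ φ ≤ φ₂}` with
`φ₂ - φ₁ < 1` and midpoint `(φ₁ + φ₂)/2 = 1/2`. -/
def XregN (A : Matrix ι ι ℤ) (hA : IsGCM A) : Set (ι → ℂ) :=
  {Z | Z ∈ Xreg A hA ∧ ∃ φ₁ φ₂ : ℝ, φ₁ ≤ φ₂ ∧ φ₂ - φ₁ < 1 ∧ φ₁ + φ₂ = 1 ∧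
    pairC Z '' (imCone A hA \ {0}) = sector φ₁ φ₂}

/-- The semi-closed upper half-plane `H = ℍ ∪ ℝ_{<0}`. -/
def semiClosedH : Set ℂ := {z | 0 < z.im} ∪ {z | z.im = 0 ∧ z.re < 0}

/-- The normalized complexified Weyl chamber
`C^N = {Z ∈ Xreg^N : Z(α i) ∈ H for all i}`. -/
def CN (A : Matrix ι ι ℤ) (hA : IsGCM A) : Set (ι → ℂ) :=
  {Z | Z ∈ XregN A hA ∧ ∀ i, Z i ∈ semiClosedH}

/-- The regular subset of the complexified Tits cone:
`T_reg = {Z ∈ Xreg : Z(I₀) ⊆ ℍ}`. -/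
def Treg (A : Matrix ι ι ℤ) (hA : IsGCM A) : Set (ι → ℂ) :=
  {Z | Z ∈ Xreg A hA ∧ ∀ l ∈ imCone A hA \ {0}, 0 < (pairC Z l).im}

open Classical in
/-- The phase `φ^I(Z)` of the imaginary cone with respect to `Z`, normalized by its
representative with `0 < φ₁`, `φ₂ < 1` (which exists and is unique when `Z(I₀) ⊆ ℍ`). -/
def phaseI (A : Matrix ι ι ℤ) (hA : IsGCM A) (Z : ι → ℂ) : ℝ :=
  if h : ∃ p : ℝ × ℝ, p.1 ≤ p.2 ∧ p.2 - p.1 < 1 ∧ 0 < p.1 ∧ p.2 < 1 ∧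
      pairC Z '' (imCone A hA \ {0}) = sector p.1 p.2
  then (h.choose.1 + h.choose.2) / 2 else 0

/-- The retraction `h_t(Z) = e^{iπt(1/2 - φ^I(Z))} · Z`. -/
def hRetract (A : Matrix ι ι ℤ) (hA : IsGCM A) (t : ℝ) (Z : ι → ℂ) : ι → ℂ :=
  Complex.exp (Real.pi * t * (1 / 2 - phaseI A hA Z) * Complex.I) • Z

/-- The wall `W_{i,+}`. -/
def wallPlus (A : Matrix ι ι ℤ) (hA : IsGCM A) (i : ι) : Set (ι → ℂ) :=
  {Z | Z ∈ XregN A hA ∧ ((Z i).im = 0 ∧ 0 < (Z i).re) ∧ ∀ j, j ≠ i → 0 < (Z j).im}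

/-- The wall `W_{i,-}`. -/
def wallMinus (A : Matrix ι ι ℤ) (hA : IsGCM A) (i : ι) : Set (ι → ℂ) :=
  {Z | Z ∈ XregN A hA ∧ ((Z i).im = 0 ∧ (Z i).re < 0) ∧ ∀ j, j ≠ i → 0 < (Z j).im}

/-- The defining relations of the Artin group attached to a symmetric GCM:
`σ i σ j = σ j σ i` if `a i j = 0` and `σ i σ j σ i = σ j σ i σ j` if `a i j = -1`. -/
def artinRels (A : Matrix ι ι ℤ) : Set (FreeGroup ι) :=
  {r | ∃ i j : ι,
    (A i j = 0 ∧ r = FreeGroup.of i * FreeGroup.of j *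
      (FreeGroup.of j * FreeGroup.of i)⁻¹) ∨
    (A i j = -1 ∧ r = FreeGroup.of i * FreeGroup.of j * FreeGroup.of i *
      (FreeGroup.of j * FreeGroup.of i * FreeGroup.of j)⁻¹)}

/-- The Artin group attached to a symmetric GCM. -/
def ArtinGroup (A : Matrix ι ι ℤ) := PresentedGroup (artinRels A)

instance (A : Matrix ι ι ℤ) : Group (ArtinGroup A) :=
  inferInstanceAs (Group (PresentedGroup (artinRels A)))

lemma IsGCM.submatrix {κ : Type*} [Fintype κ] [DecidableEq κ] {A : Matrix ι ι ℤ}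
    (hA : IsGCM A) (f : κ → ι) (hf : Function.Injective f) :
    IsGCM (A.submatrix f f) :=
  ⟨hA.1.submatrix f, fun i => hA.2.1 (f i),
    fun i j hij => hA.2.2 _ _ fun h => hij (hf h)⟩

/-! ### Auxiliary lemmas -/

section Aux

variable (A : Matrix ι ι ℤ) (hA : IsGCM A)

lemma int_decomp (α : ι → ℤ) : α = ∑ j, α j • sroot j := by
  funext k
  simp [sroot, Finset.sum_apply, Pi.single_apply]

lemma equiv_apply_coord (w : (ι → ℤ) ≃ₗ[ℤ] (ι → ℤ)) (α : ι → ℤ) (k : ι) :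
    w α k = ∑ j, α j * w (sroot j) k := by
  conv_lhs => rw [int_decomp α]
  rw [map_sum]
  simp only [map_smul, Finset.sum_apply, Pi.smul_apply, smul_eq_mul]

lemma equiv_apply_coordC (w : (ι → ℤ) ≃ₗ[ℤ] (ι → ℤ)) (α : ι → ℤ) (k : ι) :
    ((w α k : ℤ) : ℂ) = ∑ j, (α j : ℂ) * ((w (sroot j) k : ℤ) : ℂ) := by
  rw [equiv_apply_coord]; push_cast; ring

lemma equiv_apply_coordR (w : (ι → ℤ) ≃ₗ[ℤ] (ι → ℤ)) (α : ι → ℤ) (k : ι) :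
    ((w α k : ℤ) : ℝ) = ∑ j, (α j : ℝ) * ((w (sroot j) k : ℤ) : ℝ) := by
  rw [equiv_apply_coord]; push_cast; ring

lemma pairCZ_sroot (Z : ι → ℂ) (i : ι) : pairCZ Z (sroot i) = Z i := by
  simp [pairCZ, sroot, Pi.single_apply]

lemma actC_apply_eq (w : (ι → ℤ) ≃ₗ[ℤ] (ι → ℤ)) (Z : ι → ℂ) (j : ι) :
    actC w Z j = pairCZ Z (w.symm (sroot j)) := rfl

lemma pairCZ_actC (w : (ι → ℤ) ≃ₗ[ℤ] (ι → ℤ)) (Z : ι → ℂ) (α : ι → ℤ) :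
    pairCZ (actC w Z) α = pairCZ Z (w.symm α) := by
  have h : ∀ j, ((w.symm α) j : ℂ) = ∑ k, (α k : ℂ) * ((w.symm (sroot k)) j : ℂ) :=
    fun j => equiv_apply_coordC w.symm α j
  simp only [pairCZ, actC, h, Finset.mul_sum, Finset.sum_mul]
  rw [Finset.sum_comm]
  refine Finset.sum_congr rfl fun k _ => Finset.sum_congr rfl fun j _ => by ring

lemma pairC_actC (w : (ι → ℤ) ≃ₗ[ℤ] (ι → ℤ)) (Z : ι → ℂ) (l : ι → ℝ) :
    pairC (actC w Z) l = pairC Z (extR w.symm l) := by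
  have h : ∀ j, ((extR w.symm l) j : ℂ) = ∑ k, ((w.symm (sroot k)) j : ℂ) * (l k : ℂ) := by
    intro j
    simp only [extR]
    push_cast
    ring
  simp only [pairC, actC, h, Finset.mul_sum, Finset.sum_mul]
  rw [Finset.sum_comm]
  refine Finset.sum_congr rfl fun k _ => Finset.sum_congr rfl fun j _ => by ring

lemma pairCZ_sub (Z : ι → ℂ) (α β : ι → ℤ) :
    pairCZ Z (α - β) = pairCZ Z α - pairCZ Z β := by
  simp [pairCZ, mul_sub, Finset.sum_sub_distrib]

lemma pairCZ_zsmul (Z : ι → ℂ) (c : ℤ) (α : ι → ℤ) :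
    pairCZ Z (c • α) = (c : ℂ) * pairCZ Z α := by
  simp only [pairCZ, Pi.smul_apply, smul_eq_mul, Finset.mul_sum]
  refine Finset.sum_congr rfl fun k _ => by push_cast; ring

lemma extR_castR (w : (ι → ℤ) ≃ₗ[ℤ] (ι → ℤ)) (α : ι → ℤ) :
    extR w (castR α) = castR (w α) := by
  funext k
  simp only [extR, castR]
  rw [equiv_apply_coordR]
  refine Finset.sum_congr rfl fun j _ => by ring

lemma extR_zero (w : (ι → ℤ) ≃ₗ[ℤ] (ι → ℤ)) : extR w (0 : ι → ℝ) = 0 := by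
  funext k; simp [extR]

lemma extR_comp (w v : (ι → ℤ) ≃ₗ[ℤ] (ι → ℤ)) (l : ι → ℝ) :
    extR w (extR v l) = extR (v.trans w) l := by
  funext k
  simp only [extR, LinearEquiv.trans_apply, Finset.mul_sum, Finset.sum_mul]
  rw [Finset.sum_comm]
  refine Finset.sum_congr rfl fun m _ => ?_
  have h : ((w (v (sroot m)) k : ℤ) : ℝ)
      = ∑ j, ((v (sroot m)) j : ℝ) * ((w (sroot j) k : ℤ) : ℝ) :=
    equiv_apply_coordR w (v (sroot m)) k
  rw [h, Finset.sum_mul]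
  refine Finset.sum_congr rfl fun j _ => by ring

lemma extR_refl (l : ι → ℝ) :
    extR (LinearEquiv.refl ℤ (ι → ℤ)) l = l := by
  funext k
  simp [extR, sroot, Pi.single_apply]

lemma extR_extR_symm (w : (ι → ℤ) ≃ₗ[ℤ] (ι → ℤ)) (l : ι → ℝ) :
    extR w (extR w.symm l) = l := by
  rw [extR_comp, LinearEquiv.symm_trans_self, extR_refl]

lemma extR_symm_extR (w : (ι → ℤ) ≃ₗ[ℤ] (ι → ℤ)) (l : ι → ℝ) :
    extR w.symm (extR w l) = l := by
  rw [extR_comp, LinearEquiv.self_trans_symm, extR_refl]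

/-- `extR w` as a linear map. -/
def extRlin (w : (ι → ℤ) ≃ₗ[ℤ] (ι → ℤ)) : (ι → ℝ) →ₗ[ℝ] (ι → ℝ) where
  toFun := extR w
  map_add' l m := by
    funext k; simp [extR, mul_add, Finset.sum_add_distrib]
  map_smul' c l := by
    funext k
    simp only [extR, Pi.smul_apply, smul_eq_mul, RingHom.id_apply, Finset.mul_sum]
    refine Finset.sum_congr rfl fun j _ => by ring

@[simp] lemma coe_extRlin (w : (ι → ℤ) ≃ₗ[ℤ] (ι → ℤ)) : ⇑(extRlin w) = extR w := rfl

/-- `extR w` as a homeomorphism. -/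
def extRHomeo (w : (ι → ℤ) ≃ₗ[ℤ] (ι → ℤ)) : (ι → ℝ) ≃ₜ (ι → ℝ) where
  toFun := extR w
  invFun := extR w.symm
  left_inv := extR_symm_extR w
  right_inv := extR_extR_symm w
  continuous_toFun := (extRlin w).continuous_of_finiteDimensional
  continuous_invFun := (extRlin w.symm).continuous_of_finiteDimensional

@[simp] lemma coe_extRHomeo (w : (ι → ℤ) ≃ₗ[ℤ] (ι → ℤ)) : ⇑(extRHomeo w) = extR w := rfl

lemma extR_injective (w : (ι → ℤ) ≃ₗ[ℤ] (ι → ℤ)) : Function.Injective (extR w) :=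
  (extRHomeo w).injective

lemma posImRoots_stable {w : (ι → ℤ) ≃ₗ[ℤ] (ι → ℤ)} (hw : w ∈ weylGroup A hA) :
    w '' posImRoots A hA = posImRoots A hA := by
  apply Set.Subset.antisymm
  · rintro _ ⟨β, ⟨w', hw', α, hα, rfl⟩, rfl⟩
    exact ⟨w * w', mul_mem hw hw', α, hα, rfl⟩
  · rintro _ ⟨w', hw', α, hα, rfl⟩
    refine ⟨(w⁻¹ * w') α, ⟨w⁻¹ * w', mul_mem (inv_mem hw) hw', α, hα, rfl⟩, ?_⟩
    have h : w * (w⁻¹ * w') = w' := by group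
    calc w ((w⁻¹ * w') α) = (w * (w⁻¹ * w')) α := rfl
      _ = w' α := by rw [h]

lemma imCone_stable {w : (ι → ℤ) ≃ₗ[ℤ] (ι → ℤ)} (hw : w ∈ weylGroup A hA) :
    extR w '' imCone A hA = imCone A hA := by
  have hS : extR w '' (castR '' posImRoots A hA) = castR '' posImRoots A hA := by
    rw [Set.image_image]
    have h1 : ∀ α ∈ posImRoots A hA, extR w (castR α) = castR (w α) :=
      fun α _ => extR_castR w α
    rw [Set.image_congr h1, ← Set.image_image, posImRoots_stable A hA hw]
  have hcl := (extRHomeo w).image_closure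
    (convexHull ℝ (insert 0 (castR '' posImRoots A hA)))
  rw [imCone]
  rw [show extR w '' closure (convexHull ℝ (insert 0 (castR '' posImRoots A hA)))
    = closure (extR w '' convexHull ℝ (insert 0 (castR '' posImRoots A hA))) from hcl]
  have hch := (extRlin w).image_convexHull (insert 0 (castR '' posImRoots A hA))
  rw [show extR w '' convexHull ℝ (insert 0 (castR '' posImRoots A hA))
    = convexHull ℝ (extR w '' insert 0 (castR '' posImRoots A hA)) from hch]
  rw [Set.image_insert_eq, extR_zero, hS]

lemma imCone_diff_stable {w : (ι → ℤ) ≃ₗ[ℤ] (ι → ℤ)} (hw : w ∈ weylGroup A hA) :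
    extR w '' (imCone A hA \ {0}) = imCone A hA \ {0} := by
  rw [Set.image_diff (extR_injective w), imCone_stable A hA hw, Set.image_singleton,
    extR_zero]

lemma semiClosedH_ne_zero {z : ℂ} (hz : z ∈ semiClosedH) : z ≠ 0 := by
  rintro rfl
  rcases hz with h | h
  · simp [semiClosedH] at h
  · simp at h

lemma semiClosedH_add {z w : ℂ} (hz : z ∈ semiClosedH) (hw : w ∈ semiClosedH) :
    z + w ∈ semiClosedH := by
  simp only [semiClosedH, Set.mem_union, Set.mem_setOf_eq, Complex.add_im,
    Complex.add_re] at hz hw ⊢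
  rcases hz with hz | hz <;> rcases hw with hw | hw
  · left; linarith
  · left; linarith [hw.1]
  · left; linarith [hz.1]
  · right; exact ⟨by linarith [hz.1, hw.1], by linarith [hz.2, hw.2]⟩

lemma semiClosedH_int_smul {n : ℤ} (hn : 0 < n) {z : ℂ} (hz : z ∈ semiClosedH) :
    (n : ℂ) * z ∈ semiClosedH := by
  have hnr : (0 : ℝ) < (n : ℝ) := by exact_mod_cast hn
  rcases hz with h | h
  · refine Or.inl ?_
    simp only [Set.mem_setOf_eq, Complex.mul_im, Complex.intCast_re, Complex.intCast_im]
    have : (0:ℝ) < (n : ℝ) * z.im := mul_pos hnr h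
    linarith
  · refine Or.inr ⟨?_, ?_⟩
    · simp [Complex.mul_im, h.1]
    · simp only [Complex.mul_re, Complex.intCast_re, Complex.intCast_im, h.1]
      have : (n : ℝ) * z.re < 0 := mul_neg_of_pos_of_neg hnr h.2
      linarith

lemma pairCZ_mem_semiClosedH (V : ι → ℂ) (hV : ∀ j, V j ∈ semiClosedH)
    (α : ι → ℤ) (h0 : ∀ j, 0 ≤ α j) (hne : α ≠ 0) :
    pairCZ V α ∈ semiClosedH := by
  classical
  have key : ∀ s : Finset ι, (∃ j ∈ s, α j ≠ 0) →
      (∑ j ∈ s, V j * (α j : ℂ)) ∈ semiClosedH := by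
    intro s
    induction s using Finset.induction_on with
    | empty => rintro ⟨j, hj, -⟩; simp at hj
    | @insert a s ha ih =>
      rintro ⟨j, hj, hjne⟩
      rw [Finset.sum_insert ha]
      by_cases hαa : α a = 0
      · have hjs : j ∈ s := by
          rcases Finset.mem_insert.mp hj with rfl | h
          · exact absurd hαa hjne
          · exact h
        rw [hαa]
        simpa using ih ⟨j, hjs, hjne⟩
      · have hpos : 0 < α a := lt_of_le_of_ne (h0 a) (Ne.symm hαa)
        have hterm : V a * (α a : ℂ) ∈ semiClosedH := by
          have := semiClosedH_int_smul hpos (hV a)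
          rwa [mul_comm] at this
        by_cases hs : ∃ j ∈ s, α j ≠ 0
        · exact semiClosedH_add hterm (ih hs)
        · push_neg at hs
          have hz : (∑ j ∈ s, V j * (α j : ℂ)) = 0 :=
            Finset.sum_eq_zero fun j hjs => by rw [hs j hjs]; simp
          rw [hz, add_zero]
          exact hterm
  obtain ⟨j, hj⟩ := Function.ne_iff.mp hne
  exact key Finset.univ ⟨j, Finset.mem_univ j, hj⟩

lemma posRealRoots_ne_zero {α : ι → ℤ} (h : α ∈ posRealRoots A hA) : α ≠ 0 := by
  obtain ⟨⟨w, _, k, rfl⟩, -⟩ := h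
  intro h0
  have h1 : sroot k = (0 : ι → ℤ) := by
    have := congrArg w.symm h0
    simpa using this
  have := congrFun h1 k
  simp [sroot] at this

lemma sroot_mem_posRealRoots (i : ι) : sroot i ∈ posRealRoots A hA := by
  refine ⟨⟨1, one_mem _, i, rfl⟩, fun j => ?_⟩
  by_cases h : j = i <;> simp [sroot, Pi.single_apply, h]

lemma srefl_symm (i : ι) : (srefl A hA i).symm = srefl A hA i :=
  Module.reflection_symm _

lemma srefl_mem (i : ι) : srefl A hA i ∈ weylGroup A hA :=
  Subgroup.subset_closure ⟨i, rfl⟩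

lemma corootFn_sroot' (i j : ι) : corootFn A i (sroot j) = A j i := by
  show (∑ k, (sroot j) k * A k i) = A j i
  simp [sroot, Pi.single_apply]

lemma srefl_sroot (i j : ι) :
    srefl A hA i (sroot j) = sroot j - A j i • sroot i := by
  rw [srefl, Module.reflection_apply, corootFn_sroot']

lemma actC_srefl_apply (i : ι) (V : ι → ℂ) (j : ι) :
    actC (srefl A hA i) V j = V j - (A j i : ℂ) * V i := by
  rw [actC_apply_eq, srefl_symm, srefl_sroot, pairCZ_sub, pairCZ_zsmul,
    pairCZ_sroot, pairCZ_sroot]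

lemma actC_actC_srefl (i : ι) (V : ι → ℂ) :
    actC (srefl A hA i) (actC (srefl A hA i) V) = V := by
  funext j
  rw [actC_apply_eq, pairCZ_actC, srefl_symm]
  have h : srefl A hA i (srefl A hA i (sroot j)) = sroot j :=
    Module.involutive_reflection (corootFn_sroot A hA i) (sroot j)
  rw [h, pairCZ_sroot]

end Aux

/-- every point of a wall `W_{i,±}` has an open neighborhood in `Xreg^N`
contained in `C^N ∪ r_i(C^N)`. -/
theorem wall_neighborhood_subset (A : Matrix ι ι ℤ) (hA : IsGCM A)
    (hconn : (dynkin A).Connected) (hnf : ¬ IsFiniteType A) (i : ι)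
    (Z : ι → ℂ) (hZ : Z ∈ wallPlus A hA i ∪ wallMinus A hA i) :
    ∃ U : Set (ι → ℂ), IsOpen U ∧ Z ∈ U ∧
      U ∩ XregN A hA ⊆ CN A hA ∪ actC (srefl A hA i) '' CN A hA := by
  classical
  have hZi : (Z i).im = 0 := by rcases hZ with h | h <;> exact h.2.1.1
  have hZj : ∀ j, j ≠ i → 0 < (Z j).im := by rcases hZ with h | h <;> exact h.2.2
  have hwmem := srefl_mem A hA i
  set c : ι → ℝ := fun j => if j = i then 1 else (Z j).im / (|(A j i : ℝ)| + 2) with hc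
  have hcpos : ∀ j, 0 < c j := by
    intro j
    by_cases h : j = i
    · simp [hc, h]
    · simp only [hc, if_neg h]
      exact div_pos (hZj j h) (by positivity)
  have hne : (Finset.univ : Finset ι).Nonempty := ⟨i, Finset.mem_univ i⟩
  set ε : ℝ := Finset.univ.inf' hne c with hε
  have hεpos : 0 < ε := (Finset.lt_inf'_iff hne).mpr fun j _ => hcpos j
  have hεle : ∀ j, ε ≤ c j := fun j => Finset.inf'_le _ (Finset.mem_univ j)
  have hkey : ∀ j, j ≠ i → (|(A j i : ℝ)| + 1) * ε < (Z j).im := by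
    intro j hj
    have h1 : ε ≤ (Z j).im / (|(A j i : ℝ)| + 2) := by
      have := hεle j; simpa [hc, if_neg hj] using this
    have hd : (0 : ℝ) < |(A j i : ℝ)| + 2 := by positivity
    have h2 : ε * (|(A j i : ℝ)| + 2) ≤ (Z j).im := (le_div_iff₀ hd).mp h1
    nlinarith [hεpos]
  refine ⟨Metric.ball Z ε, Metric.isOpen_ball, Metric.mem_ball_self hεpos, ?_⟩
  rintro V ⟨hVb, hVN⟩
  rw [Metric.mem_ball] at hVb
  have hdist : ∀ j, ‖V j - Z j‖ < ε := fun j => by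
    rw [← Complex.dist_eq]
    exact lt_of_le_of_lt (dist_le_pi_dist V Z j) hVb
  have him : ∀ j, |(V j).im - (Z j).im| < ε := fun j =>
    lt_of_le_of_lt (by simpa using Complex.abs_im_le_norm (V j - Z j)) (hdist j)
  have himVi : |(V i).im| < ε := by
    have := him i; rwa [hZi, sub_zero] at this
  have hVjpos : ∀ j, j ≠ i → 0 < (V j).im := by
    intro j hj
    have h1 := (abs_lt.mp (him j)).1
    have h2 := hkey j hj
    have h3 : (0:ℝ) ≤ |(A j i : ℝ)| := abs_nonneg _
    nlinarith [hεpos]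
  by_cases hVi : V i ∈ semiClosedH
  · left
    exact ⟨hVN, fun j => by
      by_cases h : j = i
      · rwa [h]
      · exact Or.inl (hVjpos j h)⟩
  · right
    have hViim : (V i).im ≤ 0 := by
      by_contra h
      exact hVi (Or.inl (lt_of_not_ge h))
    have hVine : V i ≠ 0 := by
      have h := hVN.1.2 (sroot i) (sroot_mem_posRealRoots A hA i)
      rwa [pairCZ_sroot] at h
    set V' := actC (srefl A hA i) V with hV'
    have hV'i : V' i = -V i := by
      rw [hV', actC_srefl_apply, hA.2.1 i]
      push_cast; ring
    have hcoords : ∀ j, V' j ∈ semiClosedH := by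
      intro j
      by_cases h : j = i
      · subst h
        rw [hV'i]
        rcases lt_or_eq_of_le hViim with hlt | heq
        · exact Or.inl (by simpa using hlt)
        · have hre0 : ¬ (V j).re < 0 := fun hr => hVi (Or.inr ⟨heq, hr⟩)
          have hrepos : 0 < (V j).re := by
            rcases lt_trichotomy ((V j).re) 0 with h' | h' | h'
            · exact absurd h' hre0
            · exact absurd (by apply Complex.ext <;> simp [h', heq]) hVine
            · exact h'
          exact Or.inr ⟨by simpa using heq, by simpa using hrepos⟩
      · refine Or.inl (show 0 < (V' j).im from ?_)
        have h1 : V' j = V j - (A j i : ℂ) * V i := actC_srefl_apply A hA i V j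
        have h2 : (V' j).im = (V j).im - (A j i : ℝ) * (V i).im := by
          rw [h1]
          simp [Complex.sub_im, Complex.mul_im]
        rw [h2]
        have h3 : (A j i : ℝ) * (V i).im ≤ |(A j i : ℝ)| * |(V i).im| := by
          calc (A j i : ℝ) * (V i).im ≤ |(A j i : ℝ) * (V i).im| := le_abs_self _
            _ = |(A j i : ℝ)| * |(V i).im| := abs_mul _ _
        have h4 : |(A j i : ℝ)| * |(V i).im| ≤ |(A j i : ℝ)| * ε :=
          mul_le_mul_of_nonneg_left (le_of_lt himVi) (abs_nonneg _)
        have h5 := (abs_lt.mp (him j)).1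
        have h6 := hkey j h
        nlinarith
    have hV'N : V' ∈ XregN A hA := by
      obtain ⟨⟨hXs, hXr⟩, φ₁, φ₂, hφ1, hφ2, hφ3, himg⟩ := hVN
      refine ⟨⟨?_, ?_⟩, φ₁, φ₂, hφ1, hφ2, hφ3, ?_⟩
      · intro l hl
        rw [hV', pairC_actC, srefl_symm]
        refine hXs _ ?_
        rw [← imCone_diff_stable A hA hwmem]
        exact ⟨l, hl, rfl⟩
      · intro α hα
        exact semiClosedH_ne_zero (pairCZ_mem_semiClosedH V' hcoords α hα.2
          (posRealRoots_ne_zero A hA hα))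
      · have hcomp : pairC V' = pairC V ∘ extR (srefl A hA i) := by
          funext l
          rw [hV', pairC_actC, srefl_symm]
          rfl
        rw [hcomp, Set.image_comp, imCone_diff_stable A hA hwmem, himg]
    exact ⟨V', ⟨hV'N, hcoords⟩, actC_actC_srefl A hA i V⟩

end KacMoodyStab
end
end

section
/- Let A be an indecomposable GCM of affine or indefinite type, and set T_reg = {Z ∈ Xreg : Z(λ) ∈ ℍ for all λ ∈ I₀}. For Z ∈ T_reg the phase φ^I(Z) has a unique representative in (0,1), and the homotopy h : [0,1] × T_reg → T_reg, h_t(Z) = e^{iπt(1/2 − φ^I(Z))}·Z, is continuous, satisfies h_0 = id, h_1(T_reg) = Xreg^N, and h_t = id on Xreg^N for all t. In particular, Xreg^N is a deformation retract of T_reg and the inclusion Xreg^N ↪ T_reg is a homotopy equivalence. -/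
open scoped BigOperators

noncomputable section

namespace KacMoodyStab

variable {ι : Type*} [Fintype ι] [DecidableEq ι]

set_option linter.unusedSectionVars false
set_option linter.unusedVariables false
set_option maxHeartbeats 1000000
/-! ### Auxiliary lemmas -/

open Complex in
lemma pairC_def (Z : ι → ℂ) (l : ι → ℝ) : pairC Z l = ∑ i, Z i * (l i : ℂ) := rfl

lemma pairC_zero (Z : ι → ℂ) : pairC Z (0 : ι → ℝ) = 0 := by
  simp [pairC]

lemma pairC_smul_left (c : ℂ) (Z : ι → ℂ) (l : ι → ℝ) :
    pairC (c • Z) l = c * pairC Z l := by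
  simp [pairC, Finset.mul_sum, mul_assoc]

lemma pairCZ_smul_left (c : ℂ) (Z : ι → ℂ) (α : ι → ℤ) :
    pairCZ (c • Z) α = c * pairCZ Z α := by
  simp [pairCZ, Finset.mul_sum, mul_assoc]

lemma pairC_smul_right (Z : ι → ℂ) (c : ℝ) (l : ι → ℝ) :
    pairC Z (c • l) = (c : ℂ) * pairC Z l := by
  simp only [pairC, Finset.mul_sum, Pi.smul_apply, smul_eq_mul]
  refine Finset.sum_congr rfl fun i _ => ?_
  push_cast
  ring

lemma pairC_add_right (Z : ι → ℂ) (x y : ι → ℝ) :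
    pairC Z (x + y) = pairC Z x + pairC Z y := by
  simp only [pairC, ← Finset.sum_add_distrib]
  refine Finset.sum_congr rfl fun i _ => ?_
  push_cast [Pi.add_apply]
  ring

lemma continuous_pairC (Z : ι → ℂ) : Continuous (pairC Z) := by
  refine continuous_finset_sum _ fun i _ => ?_
  exact continuous_const.mul (Complex.continuous_ofReal.comp (continuous_apply i))

lemma continuous_pairC2 : Continuous (fun p : (ι → ℂ) × (ι → ℝ) => pairC p.1 p.2) := by
  refine continuous_finset_sum _ fun i _ => ?_
  exact ((continuous_apply i).comp continuous_fst).mul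
    (Complex.continuous_ofReal.comp ((continuous_apply i).comp continuous_snd))

/-! ### Sector lemmas -/

lemma mem_sector_of {r φ φ₁ φ₂ : ℝ} (hr : 0 < r) (h1 : φ₁ ≤ φ) (h2 : φ ≤ φ₂) :
    (r : ℂ) * Complex.exp ((Real.pi * φ : ℝ) * Complex.I) ∈ sector φ₁ φ₂ :=
  ⟨r, hr, φ, h1, h2, by rw [Complex.ofReal_mul]⟩

lemma sector_elim {φ₁ φ₂ : ℝ} {z : ℂ} (h : z ∈ sector φ₁ φ₂) :
    ∃ r φ : ℝ, 0 < r ∧ φ₁ ≤ φ ∧ φ ≤ φ₂ ∧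
      z = (r : ℂ) * Complex.exp ((Real.pi * φ : ℝ) * Complex.I) := by
  obtain ⟨r, hr, φ, h1, h2, hz⟩ := h
  exact ⟨r, φ, hr, h1, h2, by rw [hz, Complex.ofReal_mul]⟩

lemma sector_abs {r φ : ℝ} (hr : 0 ≤ r) :
    ‖(r : ℂ) * Complex.exp ((φ : ℝ) * Complex.I)‖ = r := by
  rw [norm_mul, Complex.norm_exp_ofReal_mul_I, Complex.norm_real, Real.norm_eq_abs, abs_of_nonneg hr, mul_one]

lemma sector_im (r φ : ℝ) :
    ((r : ℂ) * Complex.exp ((φ : ℝ) * Complex.I)).im = r * Real.sin φ := by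
  rw [Complex.im_ofReal_mul, Complex.exp_ofReal_mul_I_im]

lemma exp_pi_inj {ψ φ : ℝ} (hb : |ψ - φ| < 2)
    (h : Complex.exp ((Real.pi * ψ : ℝ) * Complex.I) =
      Complex.exp ((Real.pi * φ : ℝ) * Complex.I)) : ψ = φ := by
  rw [Complex.exp_eq_exp_iff_exists_int] at h
  obtain ⟨n, hn⟩ := h
  have him := congrArg Complex.im hn
  simp only [Complex.im_ofReal_mul, Complex.I_im, Complex.add_im, Complex.mul_im,
    Complex.re_ofReal_mul, Complex.mul_re, Complex.I_re, Complex.intCast_im,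
    Complex.intCast_re, Complex.ofReal_re, Complex.ofReal_im, Complex.re_ofNat,
    Complex.im_ofNat] at him
  -- him : π * ψ = π * φ + n * (2 * π)
  have hψφ : ψ - φ = 2 * n := by
    have hπ := Real.pi_pos
    nlinarith [him]
  have hn0 : (n : ℝ) = 0 := by
    by_contra h0
    have : (1:ℝ) ≤ |(n:ℝ)| := by
      have : n ≠ 0 := fun h => h0 (by exact_mod_cast congrArg (Int.cast : ℤ → ℝ) h)
      calc (1:ℝ) = ((1:ℤ):ℝ) := by norm_num
        _ ≤ ((|n|:ℤ):ℝ) := by exact_mod_cast Int.one_le_abs ‹n ≠ 0›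
        _ = |(n:ℝ)| := by push_cast; rfl
    rw [hψφ] at hb
    rw [abs_mul] at hb
    simp only [abs_two] at hb
    nlinarith
  rw [hn0] at hψφ
  linarith

/-- pinning lemma: if `e^{iπψ}` lies in a sector with `c ≤ φ₁ ≤ φ₂ ≤ d` and
`d - 2 < ψ < c + 2` then `φ₁ ≤ ψ ≤ φ₂`. -/
lemma sector_phase_pin {c d φ₁ φ₂ ψ : ℝ} (hc : c ≤ φ₁) (hd : φ₂ ≤ d)
    (hψl : d - 2 < ψ) (hψr : ψ < c + 2)
    (h : Complex.exp ((Real.pi * ψ : ℝ) * Complex.I) ∈ sector φ₁ φ₂) :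
    φ₁ ≤ ψ ∧ ψ ≤ φ₂ := by
  obtain ⟨r, φ, hr, h1, h2, heq⟩ := sector_elim h
  have habs : r = 1 := by
    have := congrArg (fun z : ℂ => ‖z‖) heq
    rw [Complex.norm_exp_ofReal_mul_I, sector_abs hr.le] at this
    exact this.symm
  rw [habs, Complex.ofReal_one, one_mul] at heq
  have hb : |ψ - φ| < 2 := by
    rw [abs_sub_lt_iff]
    constructor <;> linarith
  have hψφ := exp_pi_inj hb heq
  rw [hψφ]
  exact ⟨h1, h2⟩

lemma exp_self_mem_sector {φ₁ φ₂ ψ : ℝ} (h1 : φ₁ ≤ ψ) (h2 : ψ ≤ φ₂) :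
    Complex.exp ((Real.pi * ψ : ℝ) * Complex.I) ∈ sector φ₁ φ₂ := by
  have := mem_sector_of (r := 1) one_pos h1 h2
  simpa using this

lemma sector_eq_sector {φ₁ φ₂ ψ₁ ψ₂ : ℝ} (h0 : 0 < φ₁) (h12 : φ₁ ≤ φ₂) (h1 : φ₂ < 1)
    (g12 : ψ₁ ≤ ψ₂) (g0 : -1 < ψ₁) (g1 : ψ₂ < 2)
    (h : sector ψ₁ ψ₂ = sector φ₁ φ₂) : ψ₁ = φ₁ ∧ ψ₂ = φ₂ := by
  have m1 := sector_phase_pin (c := 0) (d := 1) h0.le h1.le (by linarith) (by linarith)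
      (h ▸ exp_self_mem_sector le_rfl g12)
  have m2 := sector_phase_pin (c := 0) (d := 1) h0.le h1.le (by linarith) (by linarith)
      (h ▸ exp_self_mem_sector g12 le_rfl)
  have m3 := sector_phase_pin (c := -1) (d := 2) g0.le g1.le (by linarith) (by linarith)
      (h.symm ▸ exp_self_mem_sector le_rfl h12)
  have m4 := sector_phase_pin (c := -1) (d := 2) g0.le g1.le (by linarith) (by linarith)
      (h.symm ▸ exp_self_mem_sector h12 le_rfl)
  exact ⟨le_antisymm m3.1 m1.1, le_antisymm m2.2 m4.2⟩

/-! ### Cone lemmas -/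

lemma bform_smul (A : Matrix ι ι ℤ) (n : ℤ) (α x : ι → ℤ) :
    bform A (n • α) x = n * bform A α x := by
  simp only [bform, Finset.mul_sum]
  refine Finset.sum_congr rfl fun i _ => Finset.sum_congr rfl fun j _ => ?_
  simp [Pi.smul_apply, smul_eq_mul]; ring

lemma smul_fundamentalSet {A : Matrix ι ι ℤ} {α : ι → ℤ} (hα : α ∈ fundamentalSet A)
    {n : ℤ} (hn : 0 < n) : n • α ∈ fundamentalSet A := by
  obtain ⟨h0, hne, hcon, hb⟩ := hα
  refine ⟨fun i => ?_, ?_, ?_, fun i => ?_⟩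
  · simpa using mul_nonneg hn.le (h0 i)
  · intro h
    apply hne
    funext i
    have := congrFun h i
    simp only [Pi.smul_apply, smul_eq_mul, Pi.zero_apply] at this ⊢
    exact (mul_eq_zero.1 this).resolve_left hn.ne'
  · have hset : {i | (n • α) i ≠ 0} = {i | α i ≠ 0} := by
      ext i
      simp [Pi.smul_apply, smul_eq_mul, mul_eq_zero, hn.ne']
    rw [hset]
    exact hcon
  · rw [bform_smul]
    exact mul_nonpos_of_nonneg_of_nonpos hn.le (hb i)

lemma smul_posImRoots {A : Matrix ι ι ℤ} {hA : IsGCM A} {β : ι → ℤ}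
    (hβ : β ∈ posImRoots A hA) {n : ℤ} (hn : 0 < n) : n • β ∈ posImRoots A hA := by
  obtain ⟨w, hw, α, hα, rfl⟩ := hβ
  exact ⟨w, hw, n • α, smul_fundamentalSet hα hn, (map_smul w n α).symm⟩

lemma castR_zsmul (n : ℤ) (β : ι → ℤ) : castR (n • β) = (n : ℝ) • castR β := by
  funext i
  simp [castR, Pi.smul_apply, smul_eq_mul]

lemma zero_mem_imCone (A : Matrix ι ι ℤ) (hA : IsGCM A) : (0 : ι → ℝ) ∈ imCone A hA :=
  subset_closure (subset_convexHull _ _ (Set.mem_insert _ _))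

lemma convex_imCone (A : Matrix ι ι ℤ) (hA : IsGCM A) : Convex ℝ (imCone A hA) :=
  (convex_convexHull ℝ _).closure

lemma isClosed_imCone (A : Matrix ι ι ℤ) (hA : IsGCM A) : IsClosed (imCone A hA) :=
  isClosed_closure

lemma smul_mem_imCone {A : Matrix ι ι ℤ} {hA : IsGCM A} {c : ℝ} (hc : 0 < c)
    {x : ι → ℝ} (hx : x ∈ imCone A hA) : c • x ∈ imCone A hA := by
  set S : Set (ι → ℝ) := castR '' posImRoots A hA with hS
  set H : Set (ι → ℝ) := convexHull ℝ (insert 0 S) with hH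
  have hzero : (0 : ι → ℝ) ∈ H := subset_convexHull _ _ (Set.mem_insert _ _)
  have h1 : ∀ n : ℕ, ∀ y ∈ H, ((n : ℝ) + 1) • y ∈ H := by
    intro n y hy
    have himg : ((n : ℝ) + 1) • y ∈
        ⇑(LinearMap.lsmul ℝ (ι → ℝ) ((n : ℝ) + 1)) '' H := ⟨y, hy, rfl⟩
    rw [hH, LinearMap.image_convexHull] at himg
    refine convexHull_mono ?_ himg
    rintro z ⟨w, hw, rfl⟩
    rcases Set.mem_insert_iff.1 hw with h0 | hmem
    · subst h0
      simp only [LinearMap.lsmul_apply, smul_zero]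
      exact Set.mem_insert _ _
    · obtain ⟨β, hβ, rfl⟩ := hmem
      refine Set.mem_insert_of_mem _ ⟨((n : ℤ) + 1) • β, smul_posImRoots hβ (by positivity), ?_⟩
      rw [castR_zsmul]
      push_cast
      rfl
  have h2 : ∀ y ∈ H, c • y ∈ H := by
    intro y hy
    obtain ⟨n, hn⟩ := exists_nat_ge c
    have hcn : (0 : ℝ) < (n : ℝ) + 1 := by positivity
    have hy' := h1 n y hy
    have hrep : c • y = (c / ((n : ℝ) + 1)) • (((n : ℝ) + 1) • y)
        + (1 - c / ((n : ℝ) + 1)) • (0 : ι → ℝ) := by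
      rw [smul_zero, add_zero, smul_smul, div_mul_cancel₀ _ hcn.ne']
    rw [hrep]
    refine (convex_convexHull ℝ _) hy' hzero (by positivity) ?_ (by ring)
    have : c / ((n : ℝ) + 1) ≤ 1 := by
      rw [div_le_one hcn]
      linarith
    linarith
  have hcont : Continuous fun y : ι → ℝ => c • y := continuous_const_smul c
  have hsub := image_closure_subset_closure_image (s := H) hcont
  have : c • x ∈ closure ((fun y : ι → ℝ => c • y) '' H) := hsub ⟨x, hx, rfl⟩
  refine closure_mono ?_ this
  rintro z ⟨w, hw, rfl⟩
  exact h2 w hw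

lemma mem_imCone_of_posImRoot {A : Matrix ι ι ℤ} {hA : IsGCM A} {β : ι → ℤ}
    (hβ : β ∈ posImRoots A hA) : castR β ∈ imCone A hA :=
  subset_closure (subset_convexHull _ _ (Set.mem_insert_of_mem _ ⟨β, hβ, rfl⟩))


/-! ### Quadratic form machinery for the Perron--Frobenius argument -/

/-- The real matrix of `A`. -/
def MR (A : Matrix ι ι ℤ) : Matrix ι ι ℝ := A.map ((↑) : ℤ → ℝ)

/-- The quadratic form of `A` on `ι → ℝ`. -/
def qf (A : Matrix ι ι ℤ) (x : ι → ℝ) : ℝ := ∑ i, (MR A).mulVec x i * x i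

lemma qf_expand (A : Matrix ι ι ℤ) (x : ι → ℝ) :
    qf A x = ∑ i, ∑ j, (A i j : ℝ) * x j * x i := by
  unfold qf
  refine Finset.sum_congr rfl fun i _ => ?_
  rw [show (MR A).mulVec x i = ∑ j, (A i j : ℝ) * x j from by
    simp [MR, Matrix.mulVec, dotProduct, Matrix.map_apply]]
  rw [Finset.sum_mul]

lemma qf_abs_le (A : Matrix ι ι ℤ) (hA : IsGCM A) (x : ι → ℝ) :
    qf A (fun i => |x i|) ≤ qf A x := by
  rw [qf_expand, qf_expand]
  refine Finset.sum_le_sum fun i _ => Finset.sum_le_sum fun j _ => ?_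
  rcases eq_or_ne i j with rfl | hij
  · rw [mul_assoc, mul_assoc, abs_mul_abs_self]
  · have h1 : (A i j : ℝ) ≤ 0 := by exact_mod_cast hA.2.2 i j hij
    rw [mul_assoc, mul_assoc]
    refine mul_le_mul_of_nonpos_left ?_ h1
    calc x j * x i ≤ |x j * x i| := le_abs_self _
      _ = |x j| * |x i| := abs_mul _ _

lemma qf_smul (A : Matrix ι ι ℤ) (c : ℝ) (x : ι → ℝ) :
    qf A (c • x) = c ^ 2 * qf A x := by
  rw [qf_expand, qf_expand, Finset.mul_sum]
  refine Finset.sum_congr rfl fun i _ => ?_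
  rw [Finset.mul_sum]
  refine Finset.sum_congr rfl fun j _ => ?_
  simp only [Pi.smul_apply, smul_eq_mul]
  ring

lemma qf_zero (A : Matrix ι ι ℤ) : qf A 0 = 0 := by
  simp [qf_expand]

/-- Zero-set propagation along the Dynkin diagram. -/
lemma prop_pos (A : Matrix ι ι ℤ) (hA : IsGCM A) (hconn : (dynkin A).Connected)
    {y : ι → ℝ} (h0 : ∀ i, 0 ≤ y i) (hne : y ≠ 0)
    (hz : ∀ i, y i = 0 → 0 ≤ (MR A).mulVec y i) : ∀ i, 0 < y i := by
  have hstep : ∀ i, y i = 0 → ∀ j, (dynkin A).Adj i j → y j = 0 := by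
    intro i hi j hadj
    have hsum := hz i hi
    rw [show (MR A).mulVec y i = ∑ k, (A i k : ℝ) * y k from by
      simp [MR, Matrix.mulVec, dotProduct, Matrix.map_apply]] at hsum
    have hterm : ∀ k ∈ Finset.univ.erase i, (A i k : ℝ) * y k ≤ 0 := by
      intro k hk
      have hki : k ≠ i := (Finset.mem_erase.1 hk).1
      have hAik : (A i k : ℝ) ≤ 0 := by exact_mod_cast hA.2.2 i k (Ne.symm hki)
      exact mul_nonpos_of_nonpos_of_nonneg hAik (h0 k)
    have hsplit : ∑ k, (A i k : ℝ) * y k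
        = (A i i : ℝ) * y i + ∑ k ∈ Finset.univ.erase i, (A i k : ℝ) * y k :=
      (Finset.add_sum_erase _ _ (Finset.mem_univ i)).symm
    rw [hsplit, hi, mul_zero, zero_add] at hsum
    have hall := (Finset.sum_eq_zero_iff_of_nonpos hterm).1
      (le_antisymm (Finset.sum_nonpos hterm) hsum)
    have hAij : (A i j : ℝ) < 0 := by
      rcases hadj.2 with h | h
      · exact_mod_cast h
      · have hsymm := hA.1.apply i j
        have : A i j < 0 := hsymm ▸ h
        exact_mod_cast this
    have hj := hall j (Finset.mem_erase.2 ⟨Ne.symm hadj.1, Finset.mem_univ j⟩)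
    rcases mul_eq_zero.1 hj with h | h
    · exact absurd h hAij.ne
    · exact h
  have hwalk : ∀ (u v : ι), (dynkin A).Walk u v → y u = 0 → y v = 0 := by
    intro u v w
    induction w with
    | nil => exact fun h => h
    | cons h p ih => exact fun hu => ih (hstep _ hu _ h)
  intro i
  rcases (h0 i).lt_or_eq with h | h
  · exact h
  · exfalso
    obtain ⟨k, hk⟩ : ∃ k, y k ≠ 0 := by
      by_contra hall
      push_neg at hall
      exact hne (funext fun k => hall k)
    obtain ⟨w⟩ := hconn.preconnected i k
    exact hk (hwalk i k w h.symm)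

/-- The Perron--Frobenius eigenvector of a symmetric GCM. -/
lemma perron (A : Matrix ι ι ℤ) (hA : IsGCM A) [Nonempty ι] :
    ∃ (y : ι → ℝ) (μ : ℝ), (∀ i, 0 ≤ y i) ∧ y ≠ 0 ∧
      (MR A).mulVec y = μ • y ∧ (∀ x : ι → ℝ, μ * (∑ i, x i ^ 2) ≤ qf A x) ∧
      ∀ x : ι → ℝ, qf A x = μ * (∑ i, x i ^ 2) → (MR A).mulVec x = μ • x := by
  classical
  set T : EuclideanSpace ℝ ι →L[ℝ] EuclideanSpace ℝ ι :=
    LinearMap.toContinuousLinearMap (Matrix.toEuclideanLin (MR A)) with hT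
  have hq : ∀ x : EuclideanSpace ℝ ι, T.reApplyInnerSelf x = qf A x := by
    intro x
    simp only [ContinuousLinearMap.reApplyInnerSelf, PiLp.inner_apply, RCLike.inner_apply,
      starRingEnd_apply, star_trivial, RCLike.re_to_real]
    unfold qf
    exact Finset.sum_congr rfl fun i _ => mul_comm _ _
  have hherm : (MR A).IsHermitian := Matrix.IsHermitian.ext fun i j => by
    simp [MR, Matrix.map_apply, hA.1.apply i j]
  have hsa : IsSelfAdjoint T := by
    rw [ContinuousLinearMap.isSelfAdjoint_iff_isSymmetric, hT,
      LinearMap.coe_toContinuousLinearMap]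
    exact Matrix.isHermitian_iff_isSymmetric.1 hherm
  obtain ⟨x₀, hx₀s, hx₀min⟩ := (isCompact_sphere (0 : EuclideanSpace ℝ ι) 1).exists_isMinOn
    ⟨EuclideanSpace.single (Classical.arbitrary ι) 1, by simp [EuclideanSpace.norm_single]⟩
    T.reApplyInnerSelf_continuous.continuousOn
  set y : EuclideanSpace ℝ ι := (WithLp.equiv 2 (ι → ℝ)).symm (fun i => |x₀ i|) with hy
  have hyi : ∀ i, y i = |x₀ i| := fun i => rfl
  have hx₀n : ‖x₀‖ = 1 := mem_sphere_zero_iff_norm.1 hx₀s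
  have hyn : ‖y‖ = 1 := by
    rw [show ‖y‖ = ‖x₀‖ from ?_, hx₀n]
    rw [EuclideanSpace.norm_eq, EuclideanSpace.norm_eq]
    congr 1
    exact Finset.sum_congr rfl fun i _ => by
      rw [hyi]; simp [Real.norm_eq_abs, abs_abs]
  have hy0 : y ≠ 0 := fun h => by rw [h] at hyn; simp at hyn
  have hys : y ∈ Metric.sphere (0 : EuclideanSpace ℝ ι) 1 := mem_sphere_zero_iff_norm.2 hyn
  have hqy : qf A (fun i => y i) ≤ qf A (fun i => x₀ i) := qf_abs_le A hA _
  have hymin : IsMinOn T.reApplyInnerSelf (Metric.sphere 0 1) y := by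
    rw [isMinOn_iff]
    intro x hx
    calc T.reApplyInnerSelf y = qf A y := hq y
      _ ≤ qf A (fun i => x₀ i) := hqy
      _ = T.reApplyInnerSelf x₀ := (hq x₀).symm
      _ ≤ T.reApplyInnerSelf x := hx₀min hx
  set μ := T.rayleighQuotient y with hμ
  have heig : T y = μ • y := by
    refine hsa.eq_smul_self_of_isLocalExtrOn (x₀ := y) (Or.inl ?_)
    rw [hyn]
    exact hymin.localize
  have hμq : T.reApplyInnerSelf y = μ := by
    rw [hμ]
    simp [ContinuousLinearMap.rayleighQuotient, hyn]
  have hsumsq : ∀ x : ι → ℝ, x ≠ 0 → ∑ i, x i ^ 2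
      = ‖((WithLp.equiv 2 (ι → ℝ)).symm x : EuclideanSpace ℝ ι)‖ ^ 2 := by
    intro x hx
    rw [EuclideanSpace.norm_eq, Real.sq_sqrt (by positivity)]
    refine Finset.sum_congr rfl fun i _ => ?_
    show x i ^ 2 = ‖x i‖ ^ 2
    simp [Real.norm_eq_abs, sq_abs]
  refine ⟨(fun i => y i), μ, fun i => by show (0:ℝ) ≤ y i; rw [hyi i]; exact abs_nonneg _, ?_, ?_, ?_, ?_⟩
  · intro h
    apply hy0
    ext i
    exact congrFun h i
  · funext i
    exact congrArg (fun v => v.ofLp i) heig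
  · intro x
    rcases eq_or_ne x 0 with rfl | hx0
    · simp [qf_zero]
    · set xe : EuclideanSpace ℝ ι := (WithLp.equiv 2 (ι → ℝ)).symm x with hxe
      have hxe0 : xe ≠ 0 := by
        intro h
        apply hx0
        funext i
        exact congrArg (fun v => v.ofLp i) h
      have hc0 : (0:ℝ) < ‖xe‖ := norm_pos_iff.2 hxe0
      have hss : ∑ i, x i ^ 2 = ‖xe‖ ^ 2 := hsumsq x hx0
      have hunit : (‖xe‖)⁻¹ • xe ∈ Metric.sphere (0 : EuclideanSpace ℝ ι) 1 :=
        mem_sphere_zero_iff_norm.2 (norm_smul_inv_norm (𝕜 := ℝ) hxe0)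
      have hmin := isMinOn_iff.1 hymin _ hunit
      rw [hq, hq] at hmin
      have hμeq := hμq
      rw [hq] at hμeq
      rw [hμeq] at hmin
      have hsc : qf A (fun i => ((‖xe‖)⁻¹ • xe) i) = (‖xe‖)⁻¹ ^ 2 * qf A x := by
        rw [show (fun i => ((‖xe‖)⁻¹ • xe) i) = (‖xe‖)⁻¹ • x from ?_, qf_smul]
        funext i
        rfl
      rw [hsc] at hmin
      have h2 : μ * ‖xe‖ ^ 2 ≤ qf A x := by
        have := mul_le_mul_of_nonneg_right hmin (le_of_lt (by positivity : (0:ℝ) < ‖xe‖ ^ 2))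
        calc μ * ‖xe‖ ^ 2 ≤ (‖xe‖)⁻¹ ^ 2 * qf A x * ‖xe‖ ^ 2 := this
          _ = qf A x := by field_simp
      rw [hss]
      exact h2
  · intro x hxeq
    rcases eq_or_ne x 0 with rfl | hx0
    · funext i
      simp [Matrix.mulVec_zero]
    · set xe : EuclideanSpace ℝ ι := (WithLp.equiv 2 (ι → ℝ)).symm x with hxe
      have hxe0 : xe ≠ 0 := by
        intro h
        apply hx0
        funext i
        exact congrArg (fun v => v.ofLp i) h
      have hc0 : (0:ℝ) < ‖xe‖ := norm_pos_iff.2 hxe0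
      have hss : ∑ i, x i ^ 2 = ‖xe‖ ^ 2 := hsumsq x hx0
      set u : EuclideanSpace ℝ ι := (‖xe‖)⁻¹ • xe with hu
      have hus : u ∈ Metric.sphere (0 : EuclideanSpace ℝ ι) 1 :=
        mem_sphere_zero_iff_norm.2 (norm_smul_inv_norm (𝕜 := ℝ) hxe0)
      have hsc : qf A (fun i => u i) = (‖xe‖)⁻¹ ^ 2 * qf A x := by
        rw [show (fun i => u i) = (‖xe‖)⁻¹ • x from ?_, qf_smul]
        funext i
        rfl
      have hqu : T.reApplyInnerSelf u = μ := by
        rw [hq]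
        rw [show qf A u = qf A (fun i => u i) from rfl, hsc, hxeq, hss]
        field_simp
      have humin : IsMinOn T.reApplyInnerSelf (Metric.sphere 0 1) u := by
        rw [isMinOn_iff]
        intro z hz
        rw [hqu, ← hμq]
        exact isMinOn_iff.1 hymin z hz
      have hueig : T u = μ • u := by
        have hray : T.rayleighQuotient u = μ := by
          rw [ContinuousLinearMap.rayleighQuotient, mem_sphere_zero_iff_norm.1 hus, hqu]
          norm_num
        have h1 := hsa.eq_smul_self_of_isLocalExtrOn (x₀ := u) (Or.inl ?_)
        · rw [hray] at h1
          exact h1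
        · rw [mem_sphere_zero_iff_norm.1 hus]
          exact humin.localize
      funext i
      have h2 : (MR A).mulVec (fun j => u j) i = μ * u i := congrArg (fun v => v.ofLp i) hueig
      have h3 : (MR A).mulVec (fun j => u j) i = (‖xe‖)⁻¹ * (MR A).mulVec x i := by
        rw [show (fun j => u j) = (‖xe‖)⁻¹ • x from funext fun j => rfl,
          Matrix.mulVec_smul]
        rfl
      have h4 : (‖xe‖)⁻¹ * (MR A).mulVec x i = (‖xe‖)⁻¹ * (μ * x i) := by
        rw [← h3, h2]
        show μ * ((‖xe‖)⁻¹ * x i) = (‖xe‖)⁻¹ * (μ * x i)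
        ring
      have h5 := mul_left_cancel₀ (inv_ne_zero hc0.ne') h4
      show (MR A).mulVec x i = μ * x i
      exact h5


/-- From a positive rational vector with `Aᵀq ≤ 0`, produce a fundamental root. -/
lemma fund_of_rat (A : Matrix ι ι ℤ) (hA : IsGCM A) (hconn : (dynkin A).Connected)
    [Nonempty ι] (q : ι → ℚ) (hq : ∀ i, 0 < q i)
    (hAq : ∀ i, ∑ j, (A i j : ℚ) * q j ≤ 0) :
    ∃ α : ι → ℤ, α ∈ fundamentalSet A ∧ ∀ i, 0 < α i := by
  classical
  set N : ℤ := ∏ i, ((q i).den : ℤ) with hN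
  have hN0 : 0 < N := Finset.prod_pos fun i _ => by exact_mod_cast (q i).den_pos
  have hdvd : ∀ i, ((q i).den : ℤ) ∣ N :=
    fun i => Finset.dvd_prod_of_mem (fun i => ((q i).den : ℤ)) (Finset.mem_univ i)
  set α : ι → ℤ := fun i => (q i).num * (N / ((q i).den : ℤ)) with hα
  have hcast : ∀ i, (α i : ℚ) = (N : ℚ) * q i := by
    intro i
    obtain ⟨c, hc⟩ := hdvd i
    have hden0 : ((q i).den : ℤ) ≠ 0 := by exact_mod_cast (q i).den_ne_zero
    have hnum : ((q i).num : ℚ) = q i * ((q i).den : ℚ) :=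
      (div_eq_iff (by exact_mod_cast (q i).den_ne_zero)).1 (Rat.num_div_den (q i))
    rw [hα]
    simp only
    rw [hc, Int.mul_ediv_cancel_left _ hden0]
    push_cast
    rw [hnum]
    ring
  have hαpos : ∀ i, 0 < α i := by
    intro i
    have h1 : (0 : ℚ) < (α i : ℚ) := by
      rw [hcast i]
      exact mul_pos (by exact_mod_cast hN0) (hq i)
    exact_mod_cast h1
  have hbf : ∀ i, bform A α (sroot i) ≤ 0 := by
    intro i
    have hbeq : bform A α (sroot i) = ∑ j, α j * A j i := by
      unfold bform
      refine Finset.sum_congr rfl fun j _ => ?_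
      rw [Finset.sum_eq_single i]
      · simp [sroot, Pi.single_apply]
      · intro k _ hk
        simp [sroot, Pi.single_apply, hk]
      · intro h
        exact absurd (Finset.mem_univ i) h
    rw [hbeq]
    have hcastsum : ((∑ j, α j * A j i : ℤ) : ℚ) = (N : ℚ) * ∑ j, (A i j : ℚ) * q j := by
      push_cast
      rw [Finset.mul_sum]
      refine Finset.sum_congr rfl fun j _ => ?_
      have hsym : A j i = A i j := hA.1.apply i j
      rw [show ((α j : ℚ)) = (N : ℚ) * q j from hcast j, hsym]
      push_cast
      ring
    have h2 : ((∑ j, α j * A j i : ℤ) : ℚ) ≤ 0 := by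
      rw [hcastsum]
      exact mul_nonpos_of_nonneg_of_nonpos (by exact_mod_cast hN0.le) (hAq i)
    exact_mod_cast h2
  refine ⟨α, ⟨fun i => (hαpos i).le, ?_, ?_, hbf⟩, hαpos⟩
  · intro h
    obtain ⟨i⟩ := (inferInstance : Nonempty ι)
    exact (hαpos i).ne' (congrFun h i)
  · have hset : {i | α i ≠ 0} = Set.univ := Set.eq_univ_of_forall fun i => (hαpos i).ne'
    rw [hset]
    exact (SimpleGraph.induceUnivIso (dynkin A)).connected_iff.2 hconn

/-! ### Existence of a positive imaginary root (proved later via Perron--Frobenius) -/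

theorem exists_posImRoot (A : Matrix ι ι ℤ) (hA : IsGCM A) (hconn : (dynkin A).Connected)
    (hnf : ¬ IsFiniteType A) :
    Nonempty ι ∧ ∃ α : ι → ℤ, α ∈ fundamentalSet A ∧ (∀ i, 0 < α i) := by
  classical
  rcases isEmpty_or_nonempty ι with hemp | hne
  · exfalso
    apply hnf
    refine ⟨?_, ⟨fun _ => 1, fun i => isEmptyElim i, fun i => isEmptyElim i⟩,
      fun u _ => Or.inr (Subsingleton.elim u 0)⟩
    rw [Matrix.det_isEmpty]
    norm_num
  haveI := hne
  refine ⟨hne, ?_⟩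
  obtain ⟨y, μ, hy0, hyne, heig, hmin, heqcase⟩ := perron A hA
  have hypos : ∀ i, 0 < y i :=
    prop_pos A hA hconn hy0 hyne fun i hi => by
      rw [heig]
      show (0:ℝ) ≤ μ * y i
      rw [hi, mul_zero]
  have hmv : ∀ (z : ι → ℝ) (i : ι), (MR A).mulVec z i = ∑ j, (A i j : ℝ) * z j := by
    intro z i
    simp [MR, Matrix.mulVec, dotProduct, Matrix.map_apply]
  rcases lt_trichotomy μ 0 with hμneg | hμ0 | hμpos
  · -- indefinite type : perturb to a rational vector
    set m := Finset.univ.inf' Finset.univ_nonempty y with hm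
    have hm0 : 0 < m := (Finset.lt_inf'_iff _).2 fun i _ => hypos i
    set m' := Finset.univ.inf' Finset.univ_nonempty (fun i => -(μ * y i)) with hm'
    have hm'0 : 0 < m' := (Finset.lt_inf'_iff _).2 fun i _ => by
      have := mul_pos (neg_pos.2 hμneg) (hypos i)
      show (0:ℝ) < -(μ * y i)
      nlinarith
    set cR := Finset.univ.sup' Finset.univ_nonempty (fun i => ∑ j, |(A i j : ℝ)|) with hcR
    set c := cR + 1 with hc
    have hc0 : 0 < c := by
      have hle : (0:ℝ) ≤ cR := by
        rw [hcR]
        exact le_trans (by positivity : (0:ℝ) ≤ ∑ j, |(A (Classical.arbitrary ι) j : ℝ)|)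
          (Finset.le_sup' (fun k => ∑ j, |(A k j : ℝ)|) (Finset.mem_univ (Classical.arbitrary ι)))
      linarith
    set ε := min (m / 2) (m' / (2 * c)) with hε
    have hε0 : 0 < ε := lt_min (by linarith) (by positivity)
    have hrat : ∀ i, ∃ qi : ℚ, y i - ε < (qi : ℝ) ∧ (qi : ℝ) < y i := fun i =>
      exists_rat_btwn (by linarith [hε0])
    choose q hq1 hq2 using hrat
    have hqpos : ∀ i, 0 < q i := by
      intro i
      have h1 : m ≤ y i := Finset.inf'_le _ (Finset.mem_univ i)
      have h2 : ε ≤ m / 2 := min_le_left _ _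
      have h3 : (0:ℝ) < (q i : ℝ) := by linarith [hq1 i]
      exact_mod_cast h3
    have hAq : ∀ i, ∑ j, (A i j : ℚ) * q j ≤ 0 := by
      intro i
      have hR : (((∑ j, (A i j : ℚ) * q j) : ℚ) : ℝ) < 0 := by
        push_cast
        have hAy : ∑ j, (A i j : ℝ) * (y j : ℝ) = μ * y i := by
          rw [← hmv y i, heig]
          rfl
        have hsplit : ∑ j, (A i j : ℝ) * (q j : ℝ)
            = (∑ j, (A i j : ℝ) * y j) + ∑ j, (A i j : ℝ) * ((q j : ℝ) - y j) := by
          rw [← Finset.sum_add_distrib]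
          exact Finset.sum_congr rfl fun j _ => by ring
        have hbd : ∑ j, (A i j : ℝ) * ((q j : ℝ) - y j) ≤ cR * ε := by
          calc ∑ j, (A i j : ℝ) * ((q j : ℝ) - y j)
              ≤ ∑ j, |(A i j : ℝ)| * ε := by
                refine Finset.sum_le_sum fun j _ => ?_
                calc (A i j : ℝ) * ((q j : ℝ) - y j)
                    ≤ |(A i j : ℝ) * ((q j : ℝ) - y j)| := le_abs_self _
                  _ = |(A i j : ℝ)| * |(q j : ℝ) - y j| := abs_mul _ _
                  _ ≤ |(A i j : ℝ)| * ε := by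
                      refine mul_le_mul_of_nonneg_left ?_ (abs_nonneg _)
                      rw [abs_le]
                      refine ⟨by linarith [hq1 j], by linarith [hq2 j, hε0]⟩
            _ = (∑ j, |(A i j : ℝ)|) * ε := (Finset.sum_mul _ _ _).symm
            _ ≤ cR * ε := by
                refine mul_le_mul_of_nonneg_right ?_ hε0.le
                rw [hcR]
                exact Finset.le_sup' (fun k => ∑ j, |(A k j : ℝ)|) (Finset.mem_univ i)
        have hμy : μ * y i ≤ -m' := by
          have := Finset.inf'_le (fun i => -(μ * y i)) (Finset.mem_univ i)
          linarith
        have hcε : cR * ε ≤ m' / 2 := by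
          have h1 : ε ≤ m' / (2 * c) := min_le_right _ _
          have h2 : cR * ε ≤ c * ε := mul_le_mul_of_nonneg_right (by linarith) hε0.le
          have h3 : c * ε ≤ c * (m' / (2 * c)) := mul_le_mul_of_nonneg_left h1 hc0.le
          have h4 : c * (m' / (2 * c)) = m' / 2 := by
            field_simp
          linarith
        rw [hsplit, hAy]
        linarith
      exact_mod_cast le_of_lt hR
    exact fund_of_rat A hA hconn q hqpos hAq
  · -- affine type : rational kernel vector
    have hker : (MR A).mulVec y = 0 := by
      rw [heig, hμ0, zero_smul]
    have hdetR : (MR A).det = 0 :=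
      Matrix.exists_mulVec_eq_zero_iff.1 ⟨y, hyne, hker⟩
    have hdetZ : A.det = 0 := by
      have hmap : ((A.det : ℤ) : ℝ) = (MR A).det := by
        rw [show MR A = (Int.castRingHom ℝ).mapMatrix A from rfl, ← RingHom.map_det]
        rfl
      have : ((A.det : ℤ) : ℝ) = 0 := hmap.trans hdetR
      exact_mod_cast this
    have hdetQ : (A.map ((↑) : ℤ → ℚ)).det = 0 := by
      have hmap : ((A.det : ℤ) : ℚ) = (A.map ((↑) : ℤ → ℚ)).det := by
        rw [show A.map ((↑) : ℤ → ℚ) = (Int.castRingHom ℚ).mapMatrix A from rfl,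
          ← RingHom.map_det]
        rfl
      rw [← hmap, hdetZ]
      norm_num
    obtain ⟨v, hv0, hvker⟩ := Matrix.exists_mulVec_eq_zero_iff.2 hdetQ
    set vR : ι → ℝ := fun i => ((v i : ℚ) : ℝ) with hvRdef
    have hvRker : (MR A).mulVec vR = 0 := by
      funext i
      rw [hmv]
      rw [show (∑ j, (A i j : ℝ) * vR j) = (((∑ j, (A i j : ℚ) * v j : ℚ)) : ℝ) from by
        push_cast
        rfl]
      rw [show (∑ j, (A i j : ℚ) * v j) = (A.map ((↑) : ℤ → ℚ)).mulVec v i from by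
        simp [Matrix.mulVec, dotProduct, Matrix.map_apply]]
      rw [hvker]
      simp
    have hvRne : vR ≠ 0 := by
      intro h
      apply hv0
      funext i
      have h1 := congrFun h i
      simp only [hvRdef, Pi.zero_apply, Rat.cast_eq_zero] at h1
      exact h1
    set w : ι → ℝ := fun i => |vR i| with hwdef
    have hqf1 : qf A vR = 0 := by
      unfold qf
      rw [hvRker]
      simp
    have hqf2 : qf A w ≤ 0 := le_trans (qf_abs_le A hA vR) (le_of_eq hqf1)
    have hqf3 : 0 ≤ qf A w := by
      have := hmin w
      rw [hμ0, zero_mul] at this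
      exact this
    have hqf4 : qf A w = 0 := le_antisymm hqf2 hqf3
    have hwker : (MR A).mulVec w = 0 := by
      have h5 := heqcase w (by rw [hqf4, hμ0, zero_mul])
      rw [h5, hμ0, zero_smul]
    have hw0 : w ≠ 0 := fun h => hvRne (funext fun i => abs_eq_zero.1 (congrFun h i))
    have hwpos : ∀ i, 0 < w i := prop_pos A hA hconn (fun i => abs_nonneg _) hw0
      (fun i _ => by rw [hwker]; simp)
    have hppos : ∀ i, 0 < |v i| := by
      intro i
      have h1 : (0:ℝ) < |vR i| := hwpos i
      have h2 : (0:ℝ) < ((|v i| : ℚ) : ℝ) := by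
        rw [Rat.cast_abs]
        exact h1
      exact_mod_cast h2
    have hAp : ∀ i, ∑ j, (A i j : ℚ) * |v j| ≤ 0 := by
      intro i
      have hR : ((∑ j, (A i j : ℚ) * |v j| : ℚ) : ℝ) = 0 := by
        push_cast
        rw [show ∑ j, (A i j : ℝ) * |(v j : ℝ)| = (MR A).mulVec w i from by
          rw [hmv]]
        rw [hwker]
        simp
      exact le_of_eq (by exact_mod_cast hR)
    exact fund_of_rat A hA hconn (fun i => |v i|) hppos hAp
  · -- finite type : contradiction
    exfalso
    apply hnf
    have hpd : ∀ x : ι → ℝ, x ≠ 0 → 0 < qf A x := by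
      intro x hx
      obtain ⟨i, hi⟩ := Function.ne_iff.1 hx
      have hi' : x i ≠ 0 := by simpa using hi
      have hsq : 0 < ∑ j, x j ^ 2 :=
        Finset.sum_pos' (fun j _ => sq_nonneg _)
          ⟨i, Finset.mem_univ i, (sq_nonneg (x i)).lt_of_ne (Ne.symm (pow_ne_zero 2 hi'))⟩
      calc (0:ℝ) < μ * ∑ j, x j ^ 2 := mul_pos hμpos hsq
        _ ≤ qf A x := hmin x
    refine ⟨?_, ⟨y, hypos, fun i => ?_⟩, ?_⟩
    · intro hdet
      have hdetR : (MR A).det = 0 := by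
        have hmap : ((A.det : ℤ) : ℝ) = (MR A).det := by
          rw [show MR A = (Int.castRingHom ℝ).mapMatrix A from rfl, ← RingHom.map_det]
          rfl
        rw [← hmap, hdet]
        norm_num
      obtain ⟨u, hu0, huker⟩ := Matrix.exists_mulVec_eq_zero_iff.2 hdetR
      have hzero : qf A u = 0 := by
        unfold qf
        rw [huker]
        simp
      exact absurd hzero (hpd u hu0).ne'
    · show 0 < (MR A).mulVec y i
      rw [heig]
      exact mul_pos hμpos (hypos i)
    · intro u hu
      set vv : ι → ℝ := fun i => min (u i) 0 with hvvdef
      set ww : ι → ℝ := fun i => max (u i) 0 with hwwdef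
      have hsum : ∀ i, vv i + ww i = u i := fun i => by
        show min (u i) 0 + max (u i) 0 = u i
        rw [min_add_max, add_zero]
      have hvle : ∀ i, vv i ≤ 0 := fun i => min_le_right _ _
      have hwge : ∀ i, 0 ≤ ww i := fun i => le_max_right _ _
      have hvw0 : ∀ i, vv i * ww i = 0 := fun i => by
        rcases le_total (u i) 0 with h | h
        · show min (u i) 0 * max (u i) 0 = 0
          rw [max_eq_right h, mul_zero]
        · show min (u i) 0 * max (u i) 0 = 0
          rw [min_eq_right h, zero_mul]
      have h1 : ∑ i, (MR A).mulVec u i * vv i ≤ 0 :=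
        Finset.sum_nonpos fun i _ => mul_nonpos_of_nonneg_of_nonpos (hu i) (hvle i)
      have hexp : ∑ i, (MR A).mulVec u i * vv i
          = qf A vv + ∑ i, ∑ j, (A i j : ℝ) * ww j * vv i := by
        rw [qf_expand, ← Finset.sum_add_distrib]
        refine Finset.sum_congr rfl fun i _ => ?_
        rw [hmv, Finset.sum_mul, ← Finset.sum_add_distrib]
        refine Finset.sum_congr rfl fun j _ => ?_
        rw [← hsum j]
        ring
      have h2 : 0 ≤ ∑ i, ∑ j, (A i j : ℝ) * ww j * vv i := by
        refine Finset.sum_nonneg fun i _ => Finset.sum_nonneg fun j _ => ?_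
        rcases eq_or_ne i j with rfl | hij
        · rw [mul_assoc, mul_comm (ww i) (vv i), hvw0 i, mul_zero]
        · have hAij : (A i j : ℝ) ≤ 0 := by exact_mod_cast hA.2.2 i j hij
          have hng := mul_nonneg
            (neg_nonneg.2 (mul_nonpos_of_nonpos_of_nonneg hAij (hwge j)))
            (neg_nonneg.2 (hvle i))
          rwa [neg_mul_neg] at hng
      rw [hexp] at h1
      have hqv : qf A vv ≤ 0 := by linarith
      have hvz : vv = 0 := by
        by_contra hvne
        exact absurd hqv (not_le.2 (hpd vv hvne))
      have hupos : ∀ i, 0 ≤ u i := by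
        intro i
        have h3 := hsum i
        have h4 : vv i = 0 := congrFun hvz i
        rw [h4, zero_add] at h3
        rw [← h3]
        exact hwge i
      by_cases hu0 : u = 0
      · exact Or.inr hu0
      · exact Or.inl (prop_pos A hA hconn hupos hu0 fun i _ => hu i)


lemma exists_imCone_ne (A : Matrix ι ι ℤ) (hA : IsGCM A) (hconn : (dynkin A).Connected)
    (hnf : ¬ IsFiniteType A) : ∃ x : ι → ℝ, x ∈ imCone A hA ∧ x ≠ 0 := by
  obtain ⟨⟨i₀⟩, α, hα, hpos⟩ := exists_posImRoot A hA hconn hnf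
  have hmem : α ∈ posImRoots A hA :=
    ⟨1, (weylGroup A hA).one_mem, α, hα, rfl⟩
  refine ⟨castR α, mem_imCone_of_posImRoot hmem, fun h => ?_⟩
  have := congrFun h i₀
  simp only [castR, Pi.zero_apply, Int.cast_eq_zero] at this
  exact (hpos i₀).ne' this

/-! ### The sector structure of `Z(I₀)` for `Z ∈ T_reg` -/

/-- The set of arguments of `Z(x)` for `x` in the unit sphere of the imaginary cone. -/
def argSph (A : Matrix ι ι ℤ) (hA : IsGCM A) (Z : ι → ℂ) : Set ℝ :=
  (fun x => (pairC Z x).arg) '' (imCone A hA ∩ Metric.sphere 0 1)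

lemma isCompact_sphC (A : Matrix ι ι ℤ) (hA : IsGCM A) :
    IsCompact (imCone A hA ∩ Metric.sphere 0 1) :=
  (isCompact_sphere (0 : ι → ℝ) 1).inter_left (isClosed_imCone A hA)

lemma sphC_nonempty (A : Matrix ι ι ℤ) (hA : IsGCM A) (hconn : (dynkin A).Connected)
    (hnf : ¬ IsFiniteType A) : (imCone A hA ∩ Metric.sphere 0 1).Nonempty := by
  obtain ⟨x, hx, hne⟩ := exists_imCone_ne A hA hconn hnf
  have hnorm : (0:ℝ) < ‖x‖ := norm_pos_iff.2 hne
  refine ⟨(‖x‖)⁻¹ • x, smul_mem_imCone (by positivity) hx, ?_⟩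
  rw [mem_sphere_zero_iff_norm]
  exact norm_smul_inv_norm (𝕜 := ℝ) hne

lemma sphC_subset (A : Matrix ι ι ℤ) (hA : IsGCM A) :
    imCone A hA ∩ Metric.sphere 0 1 ⊆ imCone A hA \ {0} := by
  rintro x ⟨hC, hs⟩
  refine ⟨hC, fun h0 => ?_⟩
  rw [mem_sphere_zero_iff_norm] at hs
  rw [Set.mem_singleton_iff] at h0
  rw [h0] at hs
  simp at hs

theorem treg_sector (A : Matrix ι ι ℤ) (hA : IsGCM A) (hconn : (dynkin A).Connected)
    (hnf : ¬ IsFiniteType A) {Z : ι → ℂ} (hZ : Z ∈ Treg A hA) :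
    0 < sInf (argSph A hA Z) ∧ sInf (argSph A hA Z) ≤ sSup (argSph A hA Z) ∧
      sSup (argSph A hA Z) < Real.pi ∧
      pairC Z '' (imCone A hA \ {0}) =
        sector (sInf (argSph A hA Z) / Real.pi) (sSup (argSph A hA Z) / Real.pi) := by
  set C := imCone A hA with hC
  set K := C ∩ Metric.sphere 0 1 with hK
  set S := argSph A hA Z with hSdef
  have him : ∀ x ∈ C \ {0}, 0 < (pairC Z x).im := fun x hx => hZ.2 x hx
  have hKsub : K ⊆ C \ {0} := sphC_subset A hA
  have hKc : IsCompact K := isCompact_sphC A hA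
  have hKne : K.Nonempty := sphC_nonempty A hA hconn hnf
  have hargcont : ContinuousOn (fun x => (pairC Z x).arg) (C \ {0}) := by
    intro x hx
    have : ContinuousAt (fun x => (pairC Z x).arg) x :=
      (Complex.continuousAt_arg (Complex.mem_slitPlane_iff.2 (Or.inr (him x hx).ne'))).comp
        (continuous_pairC Z).continuousAt
    exact this.continuousWithinAt
  have hScompact : IsCompact S := hKc.image_of_continuousOn (hargcont.mono hKsub)
  have hSne : S.Nonempty := hKne.image _
  have hSeq : S = (fun x => (pairC Z x).arg) '' (C \ {0}) := by
    apply Set.Subset.antisymm (Set.image_mono hKsub)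
    rintro θ ⟨x, hx, rfl⟩
    have hxne : x ≠ 0 := fun h => hx.2 (by rw [h]; exact Set.mem_singleton _)
    have hnorm : (0:ℝ) < ‖x‖ := norm_pos_iff.2 hxne
    refine ⟨(‖x‖)⁻¹ • x, ⟨smul_mem_imCone (by positivity) hx.1, ?_⟩, ?_⟩
    · show (‖x‖)⁻¹ • x ∈ Metric.sphere (0 : ι → ℝ) 1
      rw [mem_sphere_zero_iff_norm]
      exact norm_smul_inv_norm (𝕜 := ℝ) hxne
    · show (pairC Z ((‖x‖)⁻¹ • x)).arg = (pairC Z x).arg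
      rw [pairC_smul_right]
      exact Complex.arg_real_mul _ (by positivity)
  have hC0convex : Convex ℝ (C \ {0}) := by
    intro x hx y hy a b ha hb hab
    refine ⟨(convex_imCone A hA) hx.1 hy.1 ha hb hab, fun h0 => ?_⟩
    rw [Set.mem_singleton_iff] at h0
    by_cases haz : a = 0
    · subst haz
      rw [zero_add] at hab
      subst hab
      simp only [zero_smul, one_smul, zero_add] at h0
      exact hy.2 (h0 ▸ Set.mem_singleton _)
    by_cases hbz : b = 0
    · subst hbz
      rw [add_zero] at hab
      subst hab
      simp only [zero_smul, one_smul, add_zero] at h0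
      exact hx.2 (h0 ▸ Set.mem_singleton _)
    have ha' : 0 < a := lt_of_le_of_ne ha (Ne.symm haz)
    have hb' : 0 < b := lt_of_le_of_ne hb (Ne.symm hbz)
    have hpc : pairC Z (a • x + b • y) = (a:ℂ) * pairC Z x + (b:ℂ) * pairC Z y := by
      rw [pairC_add_right, pairC_smul_right, pairC_smul_right]
    have hpos : 0 < (pairC Z (a • x + b • y)).im := by
      rw [hpc]
      simp only [Complex.add_im, Complex.im_ofReal_mul]
      exact add_pos (mul_pos ha' (him x hx)) (mul_pos hb' (him y hy))
    rw [h0, pairC_zero] at hpos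
    simp at hpos
  have hDconv : Convex ℝ (pairC Z '' (C \ {0})) := by
    let L : (ι → ℝ) →ₗ[ℝ] ℂ :=
      { toFun := pairC Z
        map_add' := pairC_add_right Z
        map_smul' := fun c x => by
          show pairC Z (c • x) = c • pairC Z x
          rw [pairC_smul_right, Complex.real_smul] }
    exact hC0convex.linear_image L
  have hSpre : IsPreconnected S := by
    rw [hSeq, show ((fun x => (pairC Z x).arg) '' (C \ {0}))
        = (fun z : ℂ => z.arg) '' (pairC Z '' (C \ {0})) from (Set.image_image _ _ _).symm]
    refine (hDconv.isPreconnected).image _ ?_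
    rintro z ⟨x, hx, rfl⟩
    exact (Complex.continuousAt_arg
      (Complex.mem_slitPlane_iff.2 (Or.inr (him x hx).ne'))).continuousWithinAt
  set a := sInf S
  set b := sSup S
  have haS : a ∈ S := hScompact.sInf_mem hSne
  have hbS : b ∈ S := hScompact.sSup_mem hSne
  have hbound : ∀ θ ∈ S, 0 < θ ∧ θ < Real.pi := by
    rintro θ ⟨x, hx, rfl⟩
    have hx' := hKsub hx
    have himx := him x hx'
    constructor
    · rcases (Complex.arg_nonneg_iff.2 himx.le).lt_or_eq with h | h
      · exact h
      · exact absurd ((Complex.arg_eq_zero_iff.1 h.symm).2) himx.ne'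
    · rcases (Complex.arg_le_pi _).lt_or_eq with h | h
      · exact h
      · exact absurd (Complex.arg_eq_pi_iff.1 h).2 himx.ne'
  have hIcc : Set.Icc a b ⊆ S := hSpre.Icc_subset haS hbS
  have hab : a ≤ b := le_csSup hScompact.bddAbove haS
  have ha0 : 0 < a := (hbound a haS).1
  have hbπ : b < Real.pi := (hbound b hbS).2
  refine ⟨ha0, hab, hbπ, ?_⟩
  apply Set.Subset.antisymm
  · rintro z ⟨x, hx, rfl⟩
    have hw := him x hx
    have hwne : pairC Z x ≠ 0 := fun h => by simp [h] at hw
    have hargmem : (pairC Z x).arg ∈ S := by rw [hSeq]; exact ⟨x, hx, rfl⟩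
    have h1 : a ≤ (pairC Z x).arg := csInf_le hScompact.bddBelow hargmem
    have h2 : (pairC Z x).arg ≤ b := le_csSup hScompact.bddAbove hargmem
    have hrepr : pairC Z x = (↑‖pairC Z x‖ : ℂ) *
        Complex.exp ((Real.pi * ((pairC Z x).arg / Real.pi) : ℝ) * Complex.I) := by
      rw [show Real.pi * ((pairC Z x).arg / Real.pi) = (pairC Z x).arg from by
        field_simp]
      exact (Complex.norm_mul_exp_arg_mul_I _).symm
    rw [hrepr]
    exact mem_sector_of (norm_pos_iff.mpr hwne)
      ((div_le_div_iff_of_pos_right Real.pi_pos).2 h1) ((div_le_div_iff_of_pos_right Real.pi_pos).2 h2)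
  · rintro z hz
    obtain ⟨r, φ, hr, h1, h2, hzeq⟩ := sector_elim hz
    have hφmem : Real.pi * φ ∈ Set.Icc a b := by
      constructor
      · have := (div_le_iff₀ Real.pi_pos).1 h1
        linarith [this]
      · have := (le_div_iff₀ Real.pi_pos).1 h2
        linarith [this]
    obtain ⟨x, hxK, hargx0⟩ := hIcc hφmem
    have hargx : (pairC Z x).arg = Real.pi * φ := hargx0
    have hx0 : x ∈ C \ {0} := hKsub hxK
    have hw := him x hx0
    have hwne : pairC Z x ≠ 0 := fun h => by simp [h] at hw
    have habs : 0 < ‖pairC Z x‖ := norm_pos_iff.mpr hwne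
    refine ⟨(r / ‖pairC Z x‖) • x, ⟨smul_mem_imCone (by positivity) hx0.1,
      fun h0 => ?_⟩, ?_⟩
    · rw [Set.mem_singleton_iff, smul_eq_zero] at h0
      rcases h0 with h0 | h0
      · exact absurd h0 (by positivity)
      · exact hx0.2 (h0 ▸ Set.mem_singleton _)
    · show pairC Z ((r / ‖pairC Z x‖) • x) = z
      rw [pairC_smul_right]
      have hxrepr : pairC Z x = (↑‖pairC Z x‖ : ℂ) *
          Complex.exp ((↑(Real.pi * φ) : ℂ) * Complex.I) := by
        rw [← hargx]
        exact (Complex.norm_mul_exp_arg_mul_I _).symm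
      have key : ((r / ‖pairC Z x‖ : ℝ) : ℂ) * ((↑‖pairC Z x‖ : ℂ) *
          Complex.exp ((↑(Real.pi * φ) : ℂ) * Complex.I)) = (↑r : ℂ) *
          Complex.exp ((↑(Real.pi * φ) : ℂ) * Complex.I) := by
        rw [← mul_assoc, ← Complex.ofReal_mul, div_mul_cancel₀ _ habs.ne']
      rw [← hxrepr] at key
      rw [key, hzeq]


/-! ### Computation of `phaseI` -/

lemma phaseI_eq_of (A : Matrix ι ι ℤ) (hA : IsGCM A) {Z : ι → ℂ} {φ₁ φ₂ : ℝ}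
    (himg : pairC Z '' (imCone A hA \ {0}) = sector φ₁ φ₂)
    (h0 : 0 < φ₁) (h12 : φ₁ ≤ φ₂) (h1 : φ₂ < 1) :
    phaseI A hA Z = (φ₁ + φ₂) / 2 := by
  have hex : ∃ p : ℝ × ℝ, p.1 ≤ p.2 ∧ p.2 - p.1 < 1 ∧ 0 < p.1 ∧ p.2 < 1 ∧
      pairC Z '' (imCone A hA \ {0}) = sector p.1 p.2 :=
    ⟨(φ₁, φ₂), h12, by linarith, h0, h1, himg⟩
  rw [phaseI, dif_pos hex]
  obtain ⟨hle, hdiff, hp0, hp1, himg'⟩ := hex.choose_spec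
  have hps := sector_eq_sector h0 h12 h1 hle (by linarith) (by linarith)
    (himg'.symm.trans himg)
  rw [hps.1, hps.2]

/-! ### A Berge-type maximum theorem -/

lemma unif_bound {X Y : Type*} [TopologicalSpace X] [TopologicalSpace Y]
    {K : Set Y} (hK : IsCompact K) {u : X → Y → ℝ} {z₀ : X}
    (hu : ∀ x ∈ K, ContinuousAt (fun p : X × Y => u p.1 p.2) (z₀, x))
    {ε : ℝ} (hε : 0 < ε) :
    ∃ U ∈ nhds z₀, ∀ z ∈ U, ∀ x ∈ K, |u z x - u z₀ x| < ε := by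
  classical
  have h : ∀ x ∈ K, ∃ U ∈ nhds z₀, ∃ V ∈ nhds x,
      ∀ p ∈ U ×ˢ V, |u p.1 p.2 - u z₀ x| < ε / 2 := by
    intro x hx
    have hb : {w : ℝ | |w - u z₀ x| < ε / 2} ∈ nhds (u z₀ x) := by
      have hball : Metric.ball (u z₀ x) (ε / 2) ∈ nhds (u z₀ x) :=
        Metric.ball_mem_nhds _ (by linarith)
      refine Filter.mem_of_superset hball ?_
      intro w hw
      simpa [Real.dist_eq] using hw
    have hpre := (hu x hx).preimage_mem_nhds hb
    rw [mem_nhds_prod_iff] at hpre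
    obtain ⟨U, hU, V, hV, hUV⟩ := hpre
    exact ⟨U, hU, V, hV, fun p hp => hUV hp⟩
  choose! U hU V hV hUV using h
  obtain ⟨t, ht, hcover⟩ := hK.elim_nhds_subcover V (fun x hx => hV x hx)
  refine ⟨⋂ x ∈ t, U x, (Filter.biInter_mem t.finite_toSet).2 fun x hx => hU x (ht x hx), ?_⟩
  intro z hz y hy
  obtain ⟨x, hxt, hyV⟩ := Set.mem_iUnion₂.1 (hcover hy)
  have hzU : z ∈ U x := by
    have := Set.mem_iInter₂.1 hz x hxt
    exact this
  have h1 : |u z y - u z₀ x| < ε / 2 := hUV x (ht x hxt) (z, y) ⟨hzU, hyV⟩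
  have h2 : |u z₀ y - u z₀ x| < ε / 2 :=
    hUV x (ht x hxt) (z₀, y) ⟨mem_of_mem_nhds (hU x (ht x hxt)), hyV⟩
  have h3 : |u z y - u z₀ y| ≤ |u z y - u z₀ x| + |u z₀ x - u z₀ y| :=
    abs_sub_le _ _ _
  rw [abs_sub_comm (u z₀ x)] at h3
  linarith

lemma cont_sup_inf {X Y : Type*} [TopologicalSpace X] [TopologicalSpace Y]
    {K : Set Y} (hK : IsCompact K) (hne : K.Nonempty) {u : X → Y → ℝ} {s : Set X}
    (hu : ∀ z ∈ s, ∀ x ∈ K, ContinuousAt (fun p : X × Y => u p.1 p.2) (z, x)) :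
    ContinuousOn (fun z => sSup (u z '' K)) s ∧ ContinuousOn (fun z => sInf (u z '' K)) s := by
  have key : ∀ z₀ ∈ s, ∀ ε > (0:ℝ), ∀ᶠ z in nhdsWithin z₀ s,
      |sSup (u z '' K) - sSup (u z₀ '' K)| ≤ ε ∧ |sInf (u z '' K) - sInf (u z₀ '' K)| ≤ ε := by
    intro z₀ hz₀ ε hε
    obtain ⟨U, hUnhds, hUbd⟩ := unif_bound hK (hu z₀ hz₀) (half_pos hε)
    have hcont0 : ContinuousOn (u z₀) K := by
      intro x hx
      exact ((hu z₀ hz₀ x hx).comp (Continuous.prodMk_right z₀).continuousAt).continuousWithinAt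
    have hBc : IsCompact (u z₀ '' K) := hK.image_of_continuousOn hcont0
    have hBne : (u z₀ '' K).Nonempty := hne.image _
    have hBbdd : BddAbove (u z₀ '' K) := hBc.bddAbove
    have hBbddb : BddBelow (u z₀ '' K) := hBc.bddBelow
    filter_upwards [mem_nhdsWithin_of_mem_nhds hUnhds] with z hz
    have hAbdd : BddAbove (u z '' K) := by
      refine ⟨sSup (u z₀ '' K) + ε / 2, ?_⟩
      rintro _ ⟨x, hx, rfl⟩
      have hb := abs_lt.1 (hUbd z hz x hx)
      have := le_csSup hBbdd (Set.mem_image_of_mem _ hx)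
      linarith
    have hAbddb : BddBelow (u z '' K) := by
      refine ⟨sInf (u z₀ '' K) - ε / 2, ?_⟩
      rintro _ ⟨x, hx, rfl⟩
      have hb := abs_lt.1 (hUbd z hz x hx)
      have := csInf_le hBbddb (Set.mem_image_of_mem _ hx)
      linarith
    have hAne : (u z '' K).Nonempty := hne.image _
    constructor
    · rw [abs_sub_le_iff]
      constructor
      · have : sSup (u z '' K) ≤ sSup (u z₀ '' K) + ε / 2 := by
          refine csSup_le hAne ?_
          rintro _ ⟨x, hx, rfl⟩
          have hb := abs_lt.1 (hUbd z hz x hx)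
          have := le_csSup hBbdd (Set.mem_image_of_mem _ hx)
          linarith
        linarith
      · have : sSup (u z₀ '' K) ≤ sSup (u z '' K) + ε / 2 := by
          refine csSup_le hBne ?_
          rintro _ ⟨x, hx, rfl⟩
          have hb := abs_lt.1 (hUbd z hz x hx)
          have := le_csSup hAbdd (Set.mem_image_of_mem _ hx)
          linarith
        linarith
    · rw [abs_sub_le_iff]
      constructor
      · have : sInf (u z '' K) - ε / 2 ≤ sInf (u z₀ '' K) := by
          refine le_csInf hBne ?_
          rintro _ ⟨x, hx, rfl⟩
          have hb := abs_lt.1 (hUbd z hz x hx)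
          have := csInf_le hAbddb (Set.mem_image_of_mem _ hx)
          linarith
        linarith
      · have : sInf (u z₀ '' K) - ε / 2 ≤ sInf (u z '' K) := by
          refine le_csInf hAne ?_
          rintro _ ⟨x, hx, rfl⟩
          have hb := abs_lt.1 (hUbd z hz x hx)
          have := csInf_le hBbddb (Set.mem_image_of_mem _ hx)
          linarith
        linarith
  constructor
  · intro z₀ hz₀
    rw [ContinuousWithinAt, Metric.tendsto_nhds]
    intro ε hε
    filter_upwards [key z₀ hz₀ (ε / 2) (half_pos hε)] with z hz
    rw [Real.dist_eq]
    calc |sSup (u z '' K) - sSup (u z₀ '' K)| ≤ ε / 2 := hz.1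
      _ < ε := by linarith
  · intro z₀ hz₀
    rw [ContinuousWithinAt, Metric.tendsto_nhds]
    intro ε hε
    filter_upwards [key z₀ hz₀ (ε / 2) (half_pos hε)] with z hz
    rw [Real.dist_eq]
    calc |sInf (u z '' K) - sInf (u z₀ '' K)| ≤ ε / 2 := hz.2
      _ < ε := by linarith

lemma continuousOn_phaseI (A : Matrix ι ι ℤ) (hA : IsGCM A) (hconn : (dynkin A).Connected)
    (hnf : ¬ IsFiniteType A) : ContinuousOn (phaseI A hA) (Treg A hA) := by
  set K := imCone A hA ∩ Metric.sphere 0 1 with hKdef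
  have hu : ∀ Z ∈ Treg A hA, ∀ x ∈ K,
      ContinuousAt (fun p : (ι → ℂ) × (ι → ℝ) => (pairC p.1 p.2).arg) (Z, x) := by
    intro Z hZ x hx
    have him : 0 < (pairC Z x).im := hZ.2 x (sphC_subset A hA hx)
    have h1 : ContinuousAt Complex.arg (pairC Z x) :=
      Complex.continuousAt_arg (Complex.mem_slitPlane_iff.2 (Or.inr him.ne'))
    have h2 : ContinuousAt (fun p : (ι → ℂ) × (ι → ℝ) => pairC p.1 p.2) (Z, x) :=
      continuous_pairC2.continuousAt
    have h3 : ContinuousAt (Complex.arg ∘ fun p : (ι → ℂ) × (ι → ℝ) => pairC p.1 p.2) (Z, x) :=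
      ContinuousAt.comp h1 h2
    exact h3
  obtain ⟨hsup, hinf⟩ := cont_sup_inf (u := fun (Z : ι → ℂ) (x : ι → ℝ) => (pairC Z x).arg) (isCompact_sphC A hA) (sphC_nonempty A hA hconn hnf) hu
  have hcont : ContinuousOn
      (fun Z => (sInf ((fun x => (pairC Z x).arg) '' K) / Real.pi
        + sSup ((fun x => (pairC Z x).arg) '' K) / Real.pi) / 2) (Treg A hA) :=
    (((hinf.div_const _).add (hsup.div_const _)).div_const _)
  refine ContinuousOn.congr hcont ?_
  intro Z hZ
  obtain ⟨ha0, hab, hbπ, himg⟩ := treg_sector A hA hconn hnf hZ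
  have := phaseI_eq_of A hA himg (by positivity)
    ((div_le_div_iff_of_pos_right Real.pi_pos).2 hab)
    ((div_lt_one Real.pi_pos).2 hbπ)
  rw [this]
  rfl


/-! ### Rotation of sectors and stability of `T_reg` -/

lemma exp_mul_sector_form (δ r φ : ℝ) :
    Complex.exp ((↑(Real.pi * δ) : ℂ) * Complex.I) *
      ((r : ℂ) * Complex.exp ((↑(Real.pi * φ) : ℂ) * Complex.I))
    = (r : ℂ) * Complex.exp ((↑(Real.pi * (φ + δ)) : ℂ) * Complex.I) := by
  rw [show Complex.exp ((↑(Real.pi * δ) : ℂ) * Complex.I) *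
      ((r : ℂ) * Complex.exp ((↑(Real.pi * φ) : ℂ) * Complex.I))
    = (r : ℂ) * (Complex.exp ((↑(Real.pi * δ) : ℂ) * Complex.I) *
      Complex.exp ((↑(Real.pi * φ) : ℂ) * Complex.I)) from by ring]
  rw [← Complex.exp_add]
  congr 1
  push_cast
  ring

lemma sector_rotate (δ φ₁ φ₂ : ℝ) :
    (fun z => Complex.exp ((↑(Real.pi * δ) : ℂ) * Complex.I) * z) '' sector φ₁ φ₂
      = sector (φ₁ + δ) (φ₂ + δ) := by
  ext z
  constructor
  · rintro ⟨w, hw, rfl⟩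
    obtain ⟨r, φ, hr, h1, h2, rfl⟩ := sector_elim hw
    beta_reduce
    rw [exp_mul_sector_form]
    exact mem_sector_of hr (by linarith) (by linarith)
  · intro hz
    obtain ⟨r, φ, hr, h1, h2, rfl⟩ := sector_elim hz
    refine ⟨(r : ℂ) * Complex.exp ((↑(Real.pi * (φ - δ)) : ℂ) * Complex.I),
      mem_sector_of hr (by linarith) (by linarith), ?_⟩
    beta_reduce
    rw [exp_mul_sector_form]
    ring_nf

lemma pairC_image_smul (c : ℂ) (Z : ι → ℂ) (T : Set (ι → ℝ)) :
    pairC (c • Z) '' T = (fun z => c * z) '' (pairC Z '' T) := by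
  rw [Set.image_image]
  exact Set.image_congr fun l _ => pairC_smul_left c Z l

lemma smul_mem_Xreg {A : Matrix ι ι ℤ} {hA : IsGCM A} {Z : ι → ℂ}
    (hZ : Z ∈ Xreg A hA) {c : ℂ} (hc : c ≠ 0) : c • Z ∈ Xreg A hA := by
  constructor
  · intro l hl
    rw [pairC_smul_left]
    exact mul_ne_zero hc (hZ.1 l hl)
  · intro α hα
    rw [pairCZ_smul_left]
    exact mul_ne_zero hc (hZ.2 α hα)

lemma rotate_Treg (A : Matrix ι ι ℤ) (hA : IsGCM A) {Z : ι → ℂ} {φ₁ φ₂ δ : ℝ}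
    (hZ : Z ∈ Treg A hA)
    (himg : pairC Z '' (imCone A hA \ {0}) = sector φ₁ φ₂)
    (hd0 : 0 < φ₁ + δ) (hd1 : φ₂ + δ < 1) :
    (Complex.exp ((↑(Real.pi * δ) : ℂ) * Complex.I) • Z) ∈ Treg A hA ∧
    pairC (Complex.exp ((↑(Real.pi * δ) : ℂ) * Complex.I) • Z) '' (imCone A hA \ {0})
      = sector (φ₁ + δ) (φ₂ + δ) := by
  set c := Complex.exp ((↑(Real.pi * δ) : ℂ) * Complex.I) with hc
  have hcne : c ≠ 0 := Complex.exp_ne_zero _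
  have himg' : pairC (c • Z) '' (imCone A hA \ {0}) = sector (φ₁ + δ) (φ₂ + δ) := by
    rw [pairC_image_smul, himg, sector_rotate]
  refine ⟨⟨smul_mem_Xreg hZ.1 hcne, ?_⟩, himg'⟩
  intro l hl
  have : pairC (c • Z) l ∈ sector (φ₁ + δ) (φ₂ + δ) :=
    himg' ▸ Set.mem_image_of_mem _ hl
  obtain ⟨r, φ, hr, h1, h2, hzeq⟩ := sector_elim this
  rw [hzeq, sector_im]
  refine mul_pos hr (Real.sin_pos_of_pos_of_lt_pi ?_ ?_)
  · nlinarith [Real.pi_pos]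
  · nlinarith [Real.pi_pos]

lemma XregN_subset_Treg (A : Matrix ι ι ℤ) (hA : IsGCM A) : XregN A hA ⊆ Treg A hA := by
  rintro Z ⟨hXreg, ψ₁, ψ₂, h12, hdiff, hsum, himg⟩
  refine ⟨hXreg, ?_⟩
  intro l hl
  have hmem : pairC Z l ∈ sector ψ₁ ψ₂ := himg ▸ Set.mem_image_of_mem _ hl
  obtain ⟨r, φ, hr, hφ1, hφ2, hzeq⟩ := sector_elim hmem
  rw [hzeq, sector_im]
  have h0 : 0 < ψ₁ := by linarith
  have h1 : ψ₂ < 1 := by linarith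
  refine mul_pos hr (Real.sin_pos_of_pos_of_lt_pi ?_ ?_)
  · nlinarith [Real.pi_pos]
  · nlinarith [Real.pi_pos]

lemma phaseI_XregN (A : Matrix ι ι ℤ) (hA : IsGCM A) {Z : ι → ℂ} (hZ : Z ∈ XregN A hA) :
    phaseI A hA Z = 1 / 2 := by
  obtain ⟨_, ψ₁, ψ₂, h12, hdiff, hsum, himg⟩ := hZ
  rw [phaseI_eq_of A hA himg (by linarith) h12 (by linarith)]
  linarith

lemma hRetract_eq (A : Matrix ι ι ℤ) (hA : IsGCM A) (t : ℝ) (Z : ι → ℂ) :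
    hRetract A hA t Z = Complex.exp
      ((↑(Real.pi * (t * (1 / 2 - phaseI A hA Z))) : ℂ) * Complex.I) • Z := by
  unfold hRetract
  congr 2
  push_cast
  ring

lemma hRetract_id_XregN (A : Matrix ι ι ℤ) (hA : IsGCM A) (t : ℝ) {Z : ι → ℂ}
    (hZ : Z ∈ XregN A hA) : hRetract A hA t Z = Z := by
  rw [hRetract_eq, phaseI_XregN A hA hZ]
  norm_num

/-- `Xreg^N` is a deformation retract of `T_reg` via
`h_t(Z) = e^{iπt(1/2 - φ^I(Z))}·Z`; in particular the inclusion `Xreg^N ↪ T_reg`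
is a homotopy equivalence. -/
theorem XregN_deformation_retract_Treg (A : Matrix ι ι ℤ) (hA : IsGCM A)
    (hconn : (dynkin A).Connected) (hnf : ¬ IsFiniteType A) :
    (∀ Z ∈ Treg A hA, ∃! φm : ℝ, 0 < φm ∧ φm < 1 ∧ ∃ φ₁ φ₂ : ℝ, φ₁ ≤ φ₂ ∧
        φ₂ - φ₁ < 1 ∧ (φ₁ + φ₂) / 2 = φm ∧
        pairC Z '' (imCone A hA \ {0}) = sector φ₁ φ₂) ∧
    ContinuousOn (fun p : ℝ × (ι → ℂ) => hRetract A hA p.1 p.2)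
      (Set.Icc (0 : ℝ) 1 ×ˢ Treg A hA) ∧
    (∀ Z ∈ Treg A hA, hRetract A hA 0 Z = Z) ∧
    (∀ t ∈ Set.Icc (0 : ℝ) 1, ∀ Z ∈ Treg A hA, hRetract A hA t Z ∈ Treg A hA) ∧
    (hRetract A hA 1 '' Treg A hA = XregN A hA) ∧
    XregN A hA ⊆ Treg A hA ∧
    (∀ t ∈ Set.Icc (0 : ℝ) 1, ∀ Z ∈ XregN A hA, hRetract A hA t Z = Z) := by
  have hsec : ∀ Z ∈ Treg A hA, ∃ φ₁ φ₂ : ℝ, 0 < φ₁ ∧ φ₁ ≤ φ₂ ∧ φ₂ < 1 ∧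
      pairC Z '' (imCone A hA \ {0}) = sector φ₁ φ₂ := by
    intro Z hZ
    obtain ⟨ha0, hab, hbπ, himg⟩ := treg_sector A hA hconn hnf hZ
    exact ⟨_, _, div_pos ha0 Real.pi_pos, (div_le_div_iff_of_pos_right Real.pi_pos).2 hab,
      (div_lt_one Real.pi_pos).2 hbπ, himg⟩
  refine ⟨?_, ?_, ?_, ?_, ?_, XregN_subset_Treg A hA,
    fun t _ Z hZ => hRetract_id_XregN A hA t hZ⟩
  · -- existence and uniqueness of the phase
    intro Z hZ
    obtain ⟨φ₁, φ₂, h0, h12, h1, himg⟩ := hsec Z hZ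
    refine ⟨(φ₁ + φ₂) / 2, ⟨by linarith, by linarith, φ₁, φ₂, h12, by linarith, rfl, himg⟩, ?_⟩
    rintro y ⟨hy0, hy1, ψ₁, ψ₂, hle, hdiff, hmid, himg'⟩
    have hps := sector_eq_sector h0 h12 h1 hle (by linarith) (by linarith)
      (himg'.symm.trans himg)
    linarith [hps.1, hps.2]
  · -- continuity of the homotopy
    have hφ := continuousOn_phaseI A hA hconn hnf
    have hsnd : ContinuousOn (fun p : ℝ × (ι → ℂ) => phaseI A hA p.2)
        (Set.Icc (0:ℝ) 1 ×ˢ Treg A hA) :=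
      hφ.comp continuous_snd.continuousOn (fun p hp => hp.2)
    have hin : ContinuousOn (fun p : ℝ × (ι → ℂ) =>
        (Real.pi : ℂ) * (p.1 : ℂ) * (1 / 2 - (phaseI A hA p.2 : ℂ)) * Complex.I)
        (Set.Icc (0:ℝ) 1 ×ˢ Treg A hA) := by
      refine ContinuousOn.mul ?_ continuousOn_const
      refine ContinuousOn.mul ?_ ?_
      · exact (continuousOn_const.mul
          ((Complex.continuous_ofReal.comp continuous_fst).continuousOn))
      · exact continuousOn_const.sub (Complex.continuous_ofReal.comp_continuousOn hsnd)
    have hexp : ContinuousOn (fun p : ℝ × (ι → ℂ) =>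
        Complex.exp ((Real.pi : ℂ) * (p.1 : ℂ) * (1 / 2 - (phaseI A hA p.2 : ℂ)) * Complex.I))
        (Set.Icc (0:ℝ) 1 ×ˢ Treg A hA) := Complex.continuous_exp.comp_continuousOn hin
    exact hexp.smul continuous_snd.continuousOn
  · -- h₀ = id
    intro Z hZ
    unfold hRetract
    norm_num
  · -- stability of T_reg
    rintro t ⟨ht0, ht1⟩ Z hZ
    obtain ⟨φ₁, φ₂, h0, h12, h1, himg⟩ := hsec Z hZ
    have hph := phaseI_eq_of A hA himg h0 h12 h1
    rw [hRetract_eq, hph]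
    refine (rotate_Treg A hA (δ := t * (1 / 2 - (φ₁ + φ₂) / 2)) hZ himg ?_ ?_).1
    · rcases le_or_gt ((φ₁ + φ₂) / 2) (1 / 2) with h | h
      · have hδ : 0 ≤ t * (1 / 2 - (φ₁ + φ₂) / 2) :=
          mul_nonneg ht0 (by linarith)
        linarith
      · have hδ : 1 * (1 / 2 - (φ₁ + φ₂) / 2) ≤ t * (1 / 2 - (φ₁ + φ₂) / 2) :=
          mul_le_mul_of_nonpos_right ht1 (by linarith)
        linarith
    · rcases le_or_gt ((φ₁ + φ₂) / 2) (1 / 2) with h | h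
      · have hδ : t * (1 / 2 - (φ₁ + φ₂) / 2) ≤ 1 * (1 / 2 - (φ₁ + φ₂) / 2) :=
          mul_le_mul_of_nonneg_right ht1 (by linarith)
        linarith
      · have hδ : t * (1 / 2 - (φ₁ + φ₂) / 2) ≤ 0 :=
          mul_nonpos_of_nonneg_of_nonpos ht0 (by linarith)
        linarith
  · -- h₁ '' T_reg = Xreg^N
    apply Set.Subset.antisymm
    · rintro W ⟨Z, hZ, rfl⟩
      obtain ⟨φ₁, φ₂, h0, h12, h1, himg⟩ := hsec Z hZ
      have hph := phaseI_eq_of A hA himg h0 h12 h1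
      rw [hRetract_eq, hph]
      have hd0 : 0 < φ₁ + 1 * (1 / 2 - (φ₁ + φ₂) / 2) := by linarith
      have hd1 : φ₂ + 1 * (1 / 2 - (φ₁ + φ₂) / 2) < 1 := by linarith
      obtain ⟨hT, himg'⟩ :=
        rotate_Treg A hA (δ := 1 * (1 / 2 - (φ₁ + φ₂) / 2)) hZ himg hd0 hd1
      exact ⟨hT.1, φ₁ + 1 * (1 / 2 - (φ₁ + φ₂) / 2), φ₂ + 1 * (1 / 2 - (φ₁ + φ₂) / 2),
        by linarith, by linarith, by ring, himg'⟩
    · intro W hW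
      exact ⟨W, XregN_subset_Treg A hA hW, hRetract_id_XregN A hA 1 hW⟩


end KacMoodyStab
end
end
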